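/- arXiv:1710.06916 — 3 statements merged into one kernel-verified Lean document; each statement's English description precedes it below -/
import Mathlib

section
/- For m ≥ 1 and θ ∈ (0,1), the determinant of the m×m matrix K with entries K_{ij} = C(θ, m+i-j) (generalized binomial coefficients, for the case n = 2m) equals θ^m (θ²-1)^{m-1} (θ²-4)^{m-2} ··· (θ²-(m-1)²) divided by m^m (m²-1)^{m-1} ··· (m²-(m-1)²), and in particular is nonzero. -/
open Finset Matrix

/-- The generalized binomial coefficient `C(t, i) = t(t-1)⋯(t-i+1)/i!`. -/
noncomputable def gchoose (t : ℝ) (i : ℕ) : ℝ :=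
  (∏ j ∈ Finset.range i, (t - j)) / (Nat.factorial i)

namespace Stmt16

lemma fact_ne (k : ℕ) : (Nat.factorial k : ℝ) ≠ 0 :=
  Nat.cast_ne_zero.mpr (Nat.factorial_ne_zero k)
lemma gchoose_zero (t : ℝ) : gchoose t 0 = 1 := by simp [gchoose]
lemma GL1 (t : ℝ) (k : ℕ) :
    gchoose t (k+1) * ((k:ℝ)+1) = gchoose t k * (t - k) := by
  unfold gchoose
  rw [prod_range_succ, Nat.factorial_succ]
  push_cast
  have h1 := fact_ne k
  field_simp
lemma GL2 (t : ℝ) (k : ℕ) :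
    gchoose (t+1) (k+1) * ((k:ℝ)+1) = gchoose t k * (t+1) := by
  unfold gchoose
  rw [prod_range_succ', Nat.factorial_succ]
  push_cast
  have h1 := fact_ne k
  have h2 : (∏ j ∈ Finset.range k, (t + 1 - ((j:ℝ) + 1))) = ∏ j ∈ Finset.range k, (t - j) := by
    refine prod_congr rfl fun j _ => by ring
  rw [h2]
  field_simp
  ring
lemma GL3 (t : ℝ) (k : ℕ) :
    gchoose (t+1) k * (t + 1 - k) = gchoose t k * (t+1) := by
  have h1 := GL1 (t+1) k
  have h2 := GL2 t k
  nlinarith [h1, h2]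
lemma gchoose_ne_zero {t : ℝ} (k : ℕ) (h : ∀ j ∈ Finset.range k, t - (j:ℝ) ≠ 0) :
    gchoose t k ≠ 0 :=
  div_ne_zero (prod_ne_zero_iff.mpr h) (fact_ne k)
variable {θ : ℝ} (hθ0 : 0 < θ) (hθ1 : θ < 1)
include hθ0 hθ1 in
lemma theta_int (z : ℤ) : θ + (z:ℝ) ≠ 0 := by
  rcases le_or_gt 0 z with h | h
  · have : (0:ℝ) ≤ (z:ℝ) := by exact_mod_cast h
    linarith
  · have hz : z ≤ -1 := by omega
    have : (z:ℝ) ≤ -1 := by exact_mod_cast hz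
    linarith
include hθ0 hθ1 in
lemma theta_ne' (x : ℝ) (z : ℤ) (hx : x = θ + (z:ℝ)) : x ≠ 0 := by
  rw [hx]; exact theta_int hθ0 hθ1 z
include hθ0 hθ1 in
lemma gchoose_theta_ne (c : ℤ) (k : ℕ) : gchoose (θ + (c:ℝ)) k ≠ 0 := by
  refine gchoose_ne_zero k fun j _ => ?_
  have := theta_int hθ0 hθ1 (c - j)
  intro hh
  apply this
  push_cast
  linarith
include hθ0 hθ1 in
lemma gchoose_theta_ne' (x : ℝ) (c : ℤ) (hx : x = θ + (c:ℝ)) (k : ℕ) : gchoose x k ≠ 0 := by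
  rw [hx]; exact gchoose_theta_ne hθ0 hθ1 c k

/-- ratio in the product formula -/
noncomputable def gg (θ : ℝ) (i s : ℕ) : ℝ :=
  gchoose (θ + i) (s + i) / gchoose (θ - s + i) i

/-- conjectured value of the Toeplitz determinant -/
noncomputable def F (θ : ℝ) (n s : ℕ) : ℝ := ∏ i ∈ Finset.range n, gg θ i s

include hθ0 hθ1 in
lemma gg_ne (i s : ℕ) : gg θ i s ≠ 0 := by
  refine div_ne_zero ?_ ?_
  · exact gchoose_theta_ne' hθ0 hθ1 _ (i:ℤ) (by push_cast; ring) _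
  · exact gchoose_theta_ne' hθ0 hθ1 _ ((i:ℤ) - s) (by push_cast; ring) _

include hθ0 hθ1 in
lemma F_ne (n s : ℕ) : F θ n s ≠ 0 :=
  prod_ne_zero_iff.mpr fun i _ => gg_ne hθ0 hθ1 i s

lemma F_succ (n s : ℕ) : F θ (n+1) s = F θ n s * gg θ n s := prod_range_succ _ _

lemma F_one (s : ℕ) : F θ 1 s = gchoose θ s := by
  simp [F, gg, gchoose_zero]

include hθ0 hθ1 in
lemma P1 (i s : ℕ) : gg θ i (s+1) * ((s:ℝ)+1+i) = gg θ i s * (θ - s + i) := by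
  have h1 := GL1 (θ + (i:ℝ)) (s+i)
  push_cast at h1
  have h3 := GL3 (θ - (s:ℝ) - 1 + i) i
  rw [show θ - (s:ℝ) - 1 + i + 1 = θ - s + i from by ring] at h3
  unfold gg
  rw [show s+1+i = s+i+1 from by omega]
  have d0 : gchoose (θ - (s:ℝ) + i) i ≠ 0 :=
    gchoose_theta_ne' hθ0 hθ1 _ ((i:ℤ) - s) (by push_cast; ring) _
  have d1 : gchoose (θ - ((s:ℝ)+1) + i) i ≠ 0 :=
    gchoose_theta_ne' hθ0 hθ1 _ ((i:ℤ) - s - 1) (by push_cast; ring) _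
  push_cast
  rw [show θ - ((s:ℝ)+1) + i = θ - s - 1 + i from by ring]
  rw [show θ - ((s:ℝ)+1) + i = θ - s - 1 + i from by ring] at d1
  field_simp
  linear_combination gchoose (θ - (s:ℝ) + i) i * h1 + gchoose (θ + (i:ℝ)) (s+i) * h3

include hθ0 hθ1 in
lemma E2 (m s : ℕ) : gg θ (m+1) s * ((s:ℝ)+m+1) * (θ - s + m + 1)
    = gg θ m s * (θ + m + 1) * ((m:ℝ)+1) := by
  have hA := GL2 (θ + (m:ℝ)) (s+m)
  push_cast at hA
  have hB := GL2 (θ - (s:ℝ) + m) m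
  unfold gg
  rw [show s+(m+1) = s+m+1 from by omega]
  have d0 : gchoose (θ - (s:ℝ) + m) m ≠ 0 :=
    gchoose_theta_ne' hθ0 hθ1 _ ((m:ℤ) - s) (by push_cast; ring) _
  have d1 : gchoose (θ - (s:ℝ) + ((m:ℝ)+1)) (m+1) ≠ 0 :=
    gchoose_theta_ne' hθ0 hθ1 _ ((m:ℤ) + 1 - s) (by push_cast; ring) _
  push_cast
  rw [show θ + ((m:ℝ)+1) = θ + m + 1 from by ring,
      show θ - (s:ℝ) + ((m:ℝ)+1) = θ - s + m + 1 from by ring]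
  rw [show θ - (s:ℝ) + ((m:ℝ)+1) = θ - s + m + 1 from by ring] at d1
  rw [show θ - (s:ℝ) + m + 1 = θ - s + m + 1 from by ring] at hB
  field_simp
  linear_combination gchoose (θ-(s:ℝ)+m) m * (θ - s + m + 1) * hA
    - gchoose (θ + (m:ℝ)) (s+m) * (θ + m + 1) * hB

include hθ0 hθ1 in
lemma FP1 (N s : ℕ) : F θ N (s+1) * ∏ i ∈ Finset.range N, ((s:ℝ)+1+i)
    = F θ N s * ∏ i ∈ Finset.range N, (θ - s + i) := by
  rw [F, F, ← prod_mul_distrib, ← prod_mul_distrib]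
  exact prod_congr rfl fun i _ => P1 hθ0 hθ1 i s

lemma TS (x : ℝ) (N : ℕ) :
    (∏ i ∈ Finset.range N, (x + i)) * (x + N) = x * ∏ i ∈ Finset.range N, (x + 1 + i) := by
  have h1 : (∏ i ∈ Finset.range N, (x + i)) * (x + N) = ∏ i ∈ Finset.range (N+1), (x + i) :=
    (prod_range_succ _ N).symm
  have h2 : (∏ i ∈ Finset.range (N+1), (x + (i:ℝ)))
      = (∏ i ∈ Finset.range N, (x + ((i:ℕ)+1 : ℕ))) * (x + ((0:ℕ):ℝ)) := prod_range_succ' _ N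
  have h3 : (∏ i ∈ Finset.range N, (x + ((i:ℕ)+1 : ℕ))) = ∏ i ∈ Finset.range N, (x + 1 + i) :=
    prod_congr rfl fun i _ => by push_cast; ring
  rw [h1, h2, h3]
  push_cast
  ring

include hθ0 hθ1 in
lemma AI (m t : ℕ) :
    F θ (m+1) (t+1) ^ 2 - F θ (m+1) (t+2) * F θ (m+1) t
      = F θ (m+2) (t+1) * F θ m (t+1) := by
  -- atoms
  have hA2ne : (∏ i ∈ Finset.range (m+1), ((t:ℝ)+2+i)) ≠ 0 :=
    prod_ne_zero_iff.mpr fun i _ => by positivity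
  have hB0ne : (∏ i ∈ Finset.range (m+1), (θ - (t:ℝ) + i)) ≠ 0 :=
    prod_ne_zero_iff.mpr fun i _ => theta_ne' hθ0 hθ1 _ ((i:ℤ) - t) (by push_cast; ring)
  have hg0 : gg θ m (t+1) ≠ 0 := gg_ne hθ0 hθ1 _ _
  have hd1 : θ - (t:ℝ) - 1 + ((m:ℝ)+1) ≠ 0 := theta_ne' hθ0 hθ1 _ ((m:ℤ) - t) (by push_cast; ring)
  have hd2 : (t:ℝ)+1+((m:ℝ)+1) ≠ 0 := by positivity
  have hd3 : θ - ((t:ℝ)+1) + (m:ℝ) + 1 ≠ 0 := theta_ne' hθ0 hθ1 _ ((m:ℤ) - t) (by push_cast; ring)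
  -- relations
  have hb := FP1 hθ0 hθ1 (m+1) (t+1)
  have hc := FP1 hθ0 hθ1 (m+1) t
  have eA : (∏ i ∈ Finset.range (m+1), ((((t+1):ℕ):ℝ)+1+i))
      = ∏ i ∈ Finset.range (m+1), ((t:ℝ)+2+i) := prod_congr rfl fun i _ => by push_cast; ring
  have eB : (∏ i ∈ Finset.range (m+1), (θ - (((t+1):ℕ):ℝ) + i))
      = ∏ i ∈ Finset.range (m+1), (θ - (t:ℝ) - 1 + i) := prod_congr rfl fun i _ => by push_cast; ring
  rw [eA, eB] at hb
  have hT1 := TS (θ - (t:ℝ) - 1) (m+1)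
  have eT1 : (∏ i ∈ Finset.range (m+1), (θ - (t:ℝ) - 1 + 1 + i))
      = ∏ i ∈ Finset.range (m+1), (θ - (t:ℝ) + i) := prod_congr rfl fun i _ => by ring
  rw [eT1] at hT1
  push_cast at hT1
  have hT2 := TS ((t:ℝ)+1) (m+1)
  have eT2 : (∏ i ∈ Finset.range (m+1), ((t:ℝ) + 1 + 1 + i))
      = ∏ i ∈ Finset.range (m+1), ((t:ℝ)+2+i) := prod_congr rfl fun i _ => by ring
  rw [eT2] at hT2
  push_cast at hT2
  have hE2 := E2 hθ0 hθ1 m (t+1)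
  push_cast at hE2
  have hs1 : F θ (m+2) (t+1) = F θ (m+1) (t+1) * gg θ (m+1) (t+1) := F_succ _ _
  have hs0 : F θ (m+1) (t+1) = F θ m (t+1) * gg θ m (t+1) := F_succ _ _
  -- solved forms
  have hb' : F θ (m+1) (t+2) = F θ (m+1) (t+1) * (∏ i ∈ Finset.range (m+1), (θ - (t:ℝ) - 1 + i))
      / (∏ i ∈ Finset.range (m+1), ((t:ℝ)+2+i)) := (eq_div_iff hA2ne).mpr hb
  have hc' : F θ (m+1) t = F θ (m+1) (t+1) * (∏ i ∈ Finset.range (m+1), ((t:ℝ)+1+i))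
      / (∏ i ∈ Finset.range (m+1), (θ - (t:ℝ) + i)) := (eq_div_iff hB0ne).mpr hc.symm
  have hT1' : (∏ i ∈ Finset.range (m+1), (θ - (t:ℝ) - 1 + i))
      = (θ - (t:ℝ) - 1) * (∏ i ∈ Finset.range (m+1), (θ - (t:ℝ) + i)) / (θ - (t:ℝ) - 1 + ((m:ℝ)+1)) :=
    (eq_div_iff hd1).mpr hT1
  have hT2' : (∏ i ∈ Finset.range (m+1), ((t:ℝ)+1+i))
      = ((t:ℝ)+1) * (∏ i ∈ Finset.range (m+1), ((t:ℝ)+2+i)) / ((t:ℝ)+1+((m:ℝ)+1)) :=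
    (eq_div_iff hd2).mpr hT2
  have hE2' : gg θ (m+1) (t+1)
      = gg θ m (t+1) * (θ + (m:ℝ) + 1) * ((m:ℝ)+1) / (((t:ℝ)+1+((m:ℝ)+1)) * (θ - ((t:ℝ)+1) + (m:ℝ) + 1)) :=
    (eq_div_iff (mul_ne_zero hd2 hd3)).mpr (by linear_combination hE2)
  have hfm' : F θ m (t+1) = F θ (m+1) (t+1) / gg θ m (t+1) := (eq_div_iff hg0).mpr hs0.symm
  rw [hs1, hb', hc', hfm', hT1', hT2', hE2']
  have hx1 : θ - (t:ℝ) + m ≠ 0 := theta_ne' hθ0 hθ1 _ ((m:ℤ) - t) (by push_cast; ring)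
  have hx2 : (1:ℝ) + (t:ℝ) + ((m:ℝ)+1) ≠ 0 := by positivity
  field_simp
  ring


/-- double product -/
noncomputable def HH (x : ℝ) (m : ℕ) : ℝ :=
  ∏ i ∈ Finset.range m, ∏ l ∈ Finset.range m, (x + i - l)

lemma icc_range (f : ℝ → ℝ) (m : ℕ) :
    ∏ k ∈ Finset.Icc 1 m, f (k:ℝ) = ∏ j ∈ Finset.range m, f ((j:ℝ)+1) := by
  rw [← Finset.Ico_add_one_right_eq_Icc, prod_Ico_eq_prod_range]
  rw [show m + 1 - 1 = m from by omega]
  exact prod_congr rfl fun j _ => by push_cast; ring_nf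

lemma prodform (m : ℕ) (x : ℝ) :
    HH x m = x^m * ∏ k ∈ Finset.Icc 1 (m-1), (x^2 - (k:ℝ)^2)^(m-k) := by
  induction m with
  | zero => simp [HH]
  | succ m IH =>
    -- split the (m+1)-square product
    have hsplit : HH x (m+1) = HH x m * (∏ i ∈ Finset.range m, (x + i - m))
        * (∏ l ∈ Finset.range (m+1), (x + m - l)) := by
      unfold HH
      rw [prod_range_succ]
      congr 1
      rw [← prod_mul_distrib]
      refine prod_congr rfl fun i _ => ?_
      rw [prod_range_succ]
    have hrefl1 : (∏ i ∈ Finset.range m, (x + i - m)) = ∏ j ∈ Finset.range m, (x - 1 - j) := by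
      rw [← prod_range_reflect (fun j => x + j - m) m]
      refine prod_congr rfl fun j hj => ?_
      rw [mem_range] at hj
      have : ((m - 1 - j : ℕ) : ℝ) = (m:ℝ) - 1 - j := by
        rw [Nat.sub_sub, Nat.cast_sub (by omega : 1 + j ≤ m)]
        push_cast; ring
      rw [this]; ring
    have hrefl2 : (∏ l ∈ Finset.range (m+1), (x + m - l)) = ∏ j ∈ Finset.range (m+1), (x + j) := by
      rw [← prod_range_reflect (fun j => x + j) (m+1)]
      refine prod_congr rfl fun j hj => ?_
      rw [mem_range] at hj
      have : ((m + 1 - 1 - j : ℕ) : ℝ) = (m:ℝ) - j := by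
        rw [show m + 1 - 1 - j = m - j from by omega, Nat.cast_sub (by omega : j ≤ m)]
      rw [this]; ring
    rw [hsplit, hrefl1, hrefl2, IH]
    -- now pure bookkeeping on the RHS
    rcases Nat.eq_zero_or_pos m with hm | hm
    · subst hm; simp
    -- m ≥ 1
    have hIcc : ∏ k ∈ Finset.Icc 1 m, (x^2 - (k:ℝ)^2)^(m+1-k)
        = (∏ k ∈ Finset.Icc 1 (m-1), (x^2 - (k:ℝ)^2)^(m-k))
          * ∏ k ∈ Finset.Icc 1 m, (x^2 - (k:ℝ)^2) := by
      have h1 : ∀ k ∈ Finset.Icc 1 m, (x^2 - (k:ℝ)^2)^(m+1-k)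
          = (x^2 - (k:ℝ)^2)^(m-k) * (x^2 - (k:ℝ)^2) := by
        intro k hk
        rw [mem_Icc] at hk
        rw [show m+1-k = (m-k)+1 from by omega, pow_succ]
      rw [prod_congr rfl h1, prod_mul_distrib]
      congr 1
      have h2 : m = (m-1)+1 := by omega
      rw [h2, prod_Icc_succ_top (by omega)]
      rw [show (m-1)+1 = m from by omega]
      simp
    have hfac : ∏ k ∈ Finset.Icc 1 m, (x^2 - (k:ℝ)^2)
        = (∏ j ∈ Finset.range m, (x - 1 - j)) * (∏ j ∈ Finset.range m, (x + 1 + j)) := by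
      rw [← prod_mul_distrib]
      rw [icc_range (fun y => x^2 - y^2) m]
      exact prod_congr rfl fun j _ => by ring
    have hx : ∏ j ∈ Finset.range (m+1), (x + j) = x * ∏ j ∈ Finset.range m, (x + 1 + j) := by
      rw [prod_range_succ']
      have : (∏ j ∈ Finset.range m, (x + ((j:ℕ)+1:ℕ))) = ∏ j ∈ Finset.range m, (x + 1 + j) :=
        prod_congr rfl fun j _ => by push_cast; ring
      rw [this]
      push_cast
      ring
    rw [show (m+1)-1 = m from by omega, hIcc, hfac, hx, pow_succ]
    ring


def pmap (m : ℕ) : Fin 2 → Fin (m+2) := ![0, Fin.last (m+1)]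
def gmap (m : ℕ) : Fin m → Fin (m+2) := fun k => k.succ.castSucc

lemma gmap_val (m : ℕ) (k : Fin m) : (gmap m k : ℕ) = (k:ℕ)+1 := by simp [gmap]

def EE (m : ℕ) : (Fin 2 ⊕ Fin m) ≃ Fin (m+2) where
  toFun := Sum.elim (pmap m) (gmap m)
  invFun v := if h : (v:ℕ) = 0 then Sum.inl 0 else if h2 : (v:ℕ) = m+1 then Sum.inl 1
    else Sum.inr ⟨(v:ℕ)-1, by omega⟩
  left_inv := by
    rintro (a | k)
    · fin_cases a
      · simp [pmap]
      · have : ((Fin.last (m+1) : Fin (m+2)) : ℕ) = m+1 := rfl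
        simp [pmap, this]
    · have h := gmap_val m k
      have h1 : ¬ ((gmap m k : ℕ) = 0) := by omega
      have h2 : ¬ ((gmap m k : ℕ) = m+1) := by have := k.isLt; omega
      dsimp only [Sum.elim_inr]
      rw [dif_neg h1, dif_neg h2]
      simp only [Sum.elim_inr, dif_neg h1, dif_neg h2, Sum.inr.injEq, Fin.ext_iff, Fin.val_mk]
      omega
  right_inv := by
    intro v
    by_cases h0 : (v:ℕ) = 0
    · simp only [dif_pos h0]
      simp [pmap]
      ext
      simp [h0]
    · by_cases h1 : (v:ℕ) = m+1
      · simp only [dif_neg h0, dif_pos h1]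
        simp [pmap]
        ext
        simp [h1.symm]
      · simp only [dif_neg h0, dif_neg h1]
        simp only [Sum.elim_inr]
        ext
        rw [gmap_val]
        simp only [Fin.val_mk]
        have := v.isLt
        omega

def e₁ (m : ℕ) : (Fin 1 ⊕ Fin m) ≃ Fin (m+1) where
  toFun := Sum.elim (fun _ => Fin.last m) Fin.castSucc
  invFun v := if h : (v:ℕ) = m then Sum.inl 0 else Sum.inr ⟨(v:ℕ), by have := v.isLt; omega⟩
  left_inv := by
    rintro (a | k)
    · fin_cases a
      have : ((Fin.last m : Fin (m+1)) : ℕ) = m := rfl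
      simp [this]
    · have h : ((k.castSucc : Fin (m+1)) : ℕ) = (k:ℕ) := rfl
      have h1 : ¬ ((k.castSucc : Fin (m+1)) : ℕ) = m := by have := k.isLt; omega
      dsimp only [Sum.elim_inr]
      rw [dif_neg h1]
      congr 1
  right_inv := by
    intro v
    by_cases h0 : (v:ℕ) = m
    · simp only [dif_pos h0]
      simp
      ext
      simp [h0.symm]
    · simp only [dif_neg h0]
      simp only [Sum.elim_inr]
      ext
      simp

def e₂ (m : ℕ) : (Fin 1 ⊕ Fin m) ≃ Fin (m+1) where
  toFun := Sum.elim (fun _ => 0) Fin.succ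
  invFun v := if h : (v:ℕ) = 0 then Sum.inl 0 else Sum.inr ⟨(v:ℕ)-1, by have := v.isLt; omega⟩
  left_inv := by
    rintro (a | k)
    · fin_cases a
      simp
    · have h : ((k.succ : Fin (m+1)) : ℕ) = (k:ℕ)+1 := rfl
      have h1 : ¬ ((k.succ : Fin (m+1)) : ℕ) = 0 := by omega
      dsimp only [Sum.elim_inr]
      rw [dif_neg h1]
      simp only [Sum.elim_inr, dif_neg h1, Sum.inr.injEq, Fin.ext_iff, Fin.val_mk]
      omega
  right_inv := by
    intro v
    by_cases h0 : (v:ℕ) = 0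
    · simp only [dif_pos h0]
      simp
      ext
      simp [h0]
    · simp only [dif_neg h0]
      simp only [Sum.elim_inr]
      ext
      simp only [Fin.val_succ, Fin.val_mk]
      omega


open Equiv.Perm

lemma dj (m : ℕ) (A : Matrix (Fin (m+2)) (Fin (m+2)) ℝ)
    (hS : (A.submatrix (gmap m) (gmap m)).det ≠ 0) :
    A.det * (A.submatrix (gmap m) (gmap m)).det =
      (A.submatrix Fin.succ Fin.succ).det * (A.submatrix Fin.castSucc Fin.castSucc).det
      - (A.submatrix Fin.succ Fin.castSucc).det * (A.submatrix Fin.castSucc Fin.succ).det := by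
  classical
  set S : Matrix (Fin m) (Fin m) ℝ := A.submatrix (gmap m) (gmap m) with hSdef
  set P : Matrix (Fin 2) (Fin 2) ℝ := A.submatrix (pmap m) (pmap m) with hP
  set Q : Matrix (Fin 2) (Fin m) ℝ := A.submatrix (pmap m) (gmap m) with hQ
  set R : Matrix (Fin m) (Fin 2) ℝ := A.submatrix (gmap m) (pmap m) with hR
  haveI : Invertible S := S.invertibleOfIsUnitDet (isUnit_iff_ne_zero.mpr hS)
  set X : Matrix (Fin 2) (Fin 2) ℝ := P - Q * ⅟S * R with hX
  -- the full determinant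
  have hblock : A.submatrix (⇑(EE m)) (⇑(EE m)) = fromBlocks P Q R S := by
    ext (i|i) (j|j) <;> rfl
  have hdetA : A.det = S.det * (X 0 0 * X 1 1 - X 0 1 * X 1 0) := by
    rw [← det_submatrix_equiv_self (EE m) A, hblock, det_fromBlocks₂₂, ← hX, det_fin_two]
  -- corner (0,0) deleted
  have hc11 : (A.submatrix Fin.succ Fin.succ).det = S.det * X 1 1 := by
    rw [← det_submatrix_equiv_self (e₁ m) (A.submatrix Fin.succ Fin.succ)]
    have hb : (A.submatrix Fin.succ Fin.succ).submatrix (⇑(e₁ m)) (⇑(e₁ m)) =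
        fromBlocks (Matrix.of fun _ _ => A (pmap m 1) (pmap m 1))
          (Matrix.of fun _ k => Q 1 k) (Matrix.of fun k _ => R k 1) S := by
      ext (i|i) (j|j) <;>
        simp [e₁, pmap, gmap, hQ, hR, hSdef, Fin.succ_castSucc, Fin.succ_last, -Fin.castSucc_succ]
    rw [hb, det_fromBlocks₂₂, det_fin_one]
    congr 1
  -- corner (last,last) deleted
  have hc00 : (A.submatrix Fin.castSucc Fin.castSucc).det = S.det * X 0 0 := by
    rw [← det_submatrix_equiv_self (e₂ m) (A.submatrix Fin.castSucc Fin.castSucc)]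
    have hb : (A.submatrix Fin.castSucc Fin.castSucc).submatrix (⇑(e₂ m)) (⇑(e₂ m)) =
        fromBlocks (Matrix.of fun _ _ => A (pmap m 0) (pmap m 0))
          (Matrix.of fun _ k => Q 0 k) (Matrix.of fun k _ => R k 0) S := by
      ext (i|i) (j|j) <;>
        simp [e₂, pmap, gmap, hQ, hR, hSdef, Fin.succ_castSucc, -Fin.castSucc_succ]
    rw [hb, det_fromBlocks₂₂, det_fin_one]
    congr 1
  -- permutation relating the两 mixed corners
  set τ : Equiv.Perm (Fin 1 ⊕ Fin m) := (e₂ m).trans (e₁ m).symm with hτ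
  have hc10 : S.det * X 1 0 = (Equiv.Perm.sign τ : ℝ) * (A.submatrix Fin.succ Fin.castSucc).det := by
    have hb : (A.submatrix Fin.succ Fin.castSucc).submatrix (⇑(e₁ m)) (⇑(e₂ m)) =
        fromBlocks (Matrix.of fun _ _ => A (pmap m 1) (pmap m 0))
          (Matrix.of fun _ k => Q 1 k) (Matrix.of fun k _ => R k 0) S := by
      ext (i|i) (j|j) <;>
        simp [e₁, e₂, pmap, gmap, hQ, hR, hSdef, Fin.succ_castSucc, Fin.succ_last, -Fin.castSucc_succ]
    have hperm : (A.submatrix Fin.succ Fin.castSucc).submatrix (⇑(e₁ m)) (⇑(e₂ m)) =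
        ((A.submatrix Fin.succ Fin.castSucc).submatrix (⇑(e₁ m)) (⇑(e₁ m))).submatrix id ⇑τ := by
      ext i j
      simp [hτ, Equiv.apply_symm_apply]
    have h1 : ((A.submatrix Fin.succ Fin.castSucc).submatrix (⇑(e₁ m)) (⇑(e₂ m))).det
        = (Equiv.Perm.sign τ : ℝ) * (A.submatrix Fin.succ Fin.castSucc).det := by
      rw [hperm, det_permute', det_submatrix_equiv_self]
    rw [← h1, hb, det_fromBlocks₂₂, det_fin_one]
    congr 1
  have hc01 : S.det * X 0 1 = (Equiv.Perm.sign τ : ℝ) * (A.submatrix Fin.castSucc Fin.succ).det := by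
    have hb : (A.submatrix Fin.castSucc Fin.succ).submatrix (⇑(e₂ m)) (⇑(e₁ m)) =
        fromBlocks (Matrix.of fun _ _ => A (pmap m 0) (pmap m 1))
          (Matrix.of fun _ k => Q 0 k) (Matrix.of fun k _ => R k 1) S := by
      ext (i|i) (j|j) <;>
        simp [e₁, e₂, pmap, gmap, hQ, hR, hSdef, Fin.succ_castSucc, Fin.succ_last, -Fin.castSucc_succ]
    have hperm : (A.submatrix Fin.castSucc Fin.succ).submatrix (⇑(e₂ m)) (⇑(e₁ m)) =
        ((A.submatrix Fin.castSucc Fin.succ).submatrix (⇑(e₂ m)) (⇑(e₂ m))).submatrix id ⇑τ.symm := by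
      ext i j
      simp [hτ, Equiv.apply_symm_apply]
    have h1 : ((A.submatrix Fin.castSucc Fin.succ).submatrix (⇑(e₂ m)) (⇑(e₁ m))).det
        = (Equiv.Perm.sign τ : ℝ) * (A.submatrix Fin.castSucc Fin.succ).det := by
      rw [hperm, det_permute', det_submatrix_equiv_self, Equiv.Perm.sign_symm]
    rw [← h1, hb, det_fromBlocks₂₂, det_fin_one]
    congr 1
  have hsgn : (Equiv.Perm.sign τ : ℝ) * (Equiv.Perm.sign τ : ℝ) = 1 := by
    have : (Equiv.Perm.sign τ) * (Equiv.Perm.sign τ) = 1 := Int.units_mul_self _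
    calc (Equiv.Perm.sign τ : ℝ) * (Equiv.Perm.sign τ : ℝ)
        = ((((Equiv.Perm.sign τ) * (Equiv.Perm.sign τ) : ℤˣ) : ℤ) : ℝ) := by push_cast; ring
      _ = 1 := by rw [this]; simp
  have h34 : (A.submatrix Fin.succ Fin.castSucc).det * (A.submatrix Fin.castSucc Fin.succ).det
      = (S.det * X 1 0) * (S.det * X 0 1) := by
    rw [hc10, hc01]
    linear_combination (-(A.submatrix Fin.succ Fin.castSucc).det * (A.submatrix Fin.castSucc Fin.succ).det) * hsgn
  rw [hdetA, hc11, hc00, h34]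
  ring


lemma natfactdiv (m i : ℕ) : (m+i).factorial = i.factorial * ∏ l ∈ Finset.range m, (m+i-l) := by
  induction m with
  | zero => simp
  | succ m ih =>
    rw [show m+1+i = (m+i)+1 from by omega, Nat.factorial_succ]
    have h1 : (∏ l ∈ Finset.range (m+1), (m+i+1-l))
        = (∏ l ∈ Finset.range m, (m+i-l)) * (m+i+1) := by
      rw [prod_range_succ']
      congr 1
      exact Finset.prod_congr rfl fun l _ => by omega
    rw [h1, ih]
    ring

lemma factdiv (m i : ℕ) : ((m+i).factorial : ℝ)
    = (i.factorial : ℝ) * ∏ l ∈ Finset.range m, ((m:ℝ) + i - l) := by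
  rw [natfactdiv m i]
  push_cast
  congr 1
  refine Finset.prod_congr rfl fun l hl => ?_
  rw [mem_range] at hl
  rw [Nat.cast_sub (by omega : l ≤ m + i)]
  push_cast
  ring

include hθ0 hθ1 in
lemma gA (m i : ℕ) : gg θ i m * ((m+i).factorial : ℝ)
    = (∏ l ∈ Finset.range m, (θ + i - l)) * (i.factorial : ℝ) := by
  have key : (∏ j ∈ Finset.range (m+i), (θ + (i:ℝ) - j))
      = (∏ l ∈ Finset.range m, (θ + (i:ℝ) - l)) * (∏ j ∈ Finset.range i, (θ - (m:ℝ) + i - j)) := by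
    rw [prod_range_add]
    congr 1
    exact Finset.prod_congr rfl fun j _ => by push_cast; ring
  have hK2 : (∏ j ∈ Finset.range i, (θ - (m:ℝ) + i - j)) ≠ 0 :=
    prod_ne_zero_iff.mpr fun j _ => theta_ne' hθ0 hθ1 _ ((i:ℤ) - m - j) (by push_cast; ring)
  unfold gg gchoose
  rw [key]
  have hf1 := fact_ne (m+i)
  have hf2 := fact_ne i
  push_cast at hf1 ⊢
  field_simp

include hθ0 hθ1 in
lemma HH_theta_ne (m : ℕ) : HH θ m ≠ 0 :=
  prod_ne_zero_iff.mpr fun i _ => prod_ne_zero_iff.mpr fun l _ =>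
    theta_ne' hθ0 hθ1 _ ((i:ℤ) - l) (by push_cast; ring)

lemma HH_m_pos (m : ℕ) : 0 < HH (m:ℝ) m := by
  refine prod_pos fun i _ => prod_pos fun l hl => ?_
  rw [mem_range] at hl
  have h1 : (l:ℝ) < m := by exact_mod_cast hl
  have h2 : (0:ℝ) ≤ i := Nat.cast_nonneg i
  linarith

include hθ0 hθ1 in
lemma Fmm (m : ℕ) : F θ m m * HH (m:ℝ) m = HH θ m := by
  have hB : F θ m m * ∏ i ∈ Finset.range m, (((m+i).factorial : ℕ) : ℝ)
      = HH θ m * ∏ i ∈ Finset.range m, ((i.factorial : ℕ) : ℝ) := by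
    rw [F, HH, ← prod_mul_distrib, ← prod_mul_distrib]
    exact Finset.prod_congr rfl fun i _ => gA hθ0 hθ1 m i
  have hC : (∏ i ∈ Finset.range m, (((m+i).factorial : ℕ) : ℝ))
      = (∏ i ∈ Finset.range m, ((i.factorial : ℕ) : ℝ)) * HH (m:ℝ) m := by
    rw [HH, ← prod_mul_distrib]
    exact Finset.prod_congr rfl fun i _ => factdiv m i
  have hne : (∏ i ∈ Finset.range m, ((i.factorial : ℕ) : ℝ)) ≠ 0 :=
    prod_ne_zero_iff.mpr fun i _ => fact_ne i
  rw [hC] at hB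
  have : (F θ m m * HH (m:ℝ) m) * (∏ i ∈ Finset.range m, ((i.factorial : ℕ) : ℝ))
      = HH θ m * (∏ i ∈ Finset.range m, ((i.factorial : ℕ) : ℝ)) := by
    linear_combination hB
  exact mul_right_cancel₀ hne this

/-- the Toeplitz matrix -/
noncomputable def T (θ : ℝ) (n s : ℕ) : Matrix (Fin n) (Fin n) ℝ :=
  Matrix.of fun i j => gchoose θ (s + (i:ℕ) - (j:ℕ))

include hθ0 hθ1 in
lemma main (n : ℕ) : ∀ s : ℕ, n ≤ s + 1 → (T θ n s).det = F θ n s := by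
  induction n using Nat.strong_induction_on with
  | _ n ih =>
    match n with
    | 0 =>
      intro s _
      simp [T, F]
    | 1 =>
      intro s _
      rw [det_fin_one, F_one]
      simp [T]
    | (m+2) =>
      intro s hs
      obtain ⟨t, rfl⟩ : ∃ t, s = t+1 := ⟨s-1, by omega⟩
      have hmt : m ≤ t := by omega
      set A : Matrix (Fin (m+2)) (Fin (m+2)) ℝ := T θ (m+2) (t+1) with hA
      have hinner : A.submatrix (gmap m) (gmap m) = T θ m (t+1) := by
        ext k k'
        simp only [hA, T, submatrix_apply, Matrix.of_apply, gmap_val]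
        congr 1
        omega
      have h11 : A.submatrix Fin.succ Fin.succ = T θ (m+1) (t+1) := by
        ext i j
        simp only [hA, T, submatrix_apply, Matrix.of_apply, Fin.val_succ]
        congr 1
        omega
      have h00 : A.submatrix Fin.castSucc Fin.castSucc = T θ (m+1) (t+1) := by
        ext i j
        simp only [hA, T, submatrix_apply, Matrix.of_apply, Fin.coe_castSucc]
      have h10 : A.submatrix Fin.succ Fin.castSucc = T θ (m+1) (t+2) := by
        ext i j
        simp only [hA, T, submatrix_apply, Matrix.of_apply, Fin.val_succ, Fin.coe_castSucc]
        congr 1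
        omega
      have h01 : A.submatrix Fin.castSucc Fin.succ = T θ (m+1) t := by
        ext i j
        simp only [hA, T, submatrix_apply, Matrix.of_apply, Fin.val_succ, Fin.coe_castSucc]
        congr 1
        omega
      have dS : (T θ m (t+1)).det = F θ m (t+1) := ih m (by omega) (t+1) (by omega)
      have hSne : (A.submatrix (gmap m) (gmap m)).det ≠ 0 := by
        rw [hinner, dS]
        exact F_ne hθ0 hθ1 m (t+1)
      have hdj := dj m A hSne
      rw [hinner, h11, h00, h10, h01, dS,
        ih (m+1) (by omega) (t+1) (by omega),
        ih (m+1) (by omega) (t+2) (by omega),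
        ih (m+1) (by omega) t (by omega)] at hdj
      have hAI := AI hθ0 hθ1 m t
      have hcan : (A.det) * F θ m (t+1) = F θ (m+2) (t+1) * F θ m (t+1) := by
        rw [hdj, ← hAI]
        ring
      exact mul_right_cancel₀ (F_ne hθ0 hθ1 m (t+1)) hcan

end Stmt16

theorem stmt_16 (m : ℕ) (hm : 1 ≤ m) (θ : ℝ) (hθ0 : 0 < θ) (hθ1 : θ < 1)
    (K : Matrix (Fin m) (Fin m) ℝ)
    (hK : ∀ i j : Fin m, K i j = gchoose θ (m + (i : ℕ) - (j : ℕ))) :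
    K.det = (θ ^ m * ∏ k ∈ Finset.Icc 1 (m - 1), (θ ^ 2 - (k:ℝ) ^ 2) ^ (m - k)) /
        ((m : ℝ) ^ m * ∏ k ∈ Finset.Icc 1 (m - 1), ((m : ℝ) ^ 2 - (k:ℝ) ^ 2) ^ (m - k)) ∧
      K.det ≠ 0 := by
  classical
  have hKT : K = Stmt16.T θ m m := by
    ext i j
    rw [hK]
    rfl
  have hdet : K.det = Stmt16.F θ m m := by
    rw [hKT, Stmt16.main hθ0 hθ1 m m (by omega)]
  have hHm : 0 < Stmt16.HH (m:ℝ) m := Stmt16.HH_m_pos m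
  have hFval : Stmt16.F θ m m = Stmt16.HH θ m / Stmt16.HH (m:ℝ) m :=
    (eq_div_iff (ne_of_gt hHm)).mpr (Stmt16.Fmm hθ0 hθ1 m)
  have hform1 := Stmt16.prodform m θ
  have hform2 := Stmt16.prodform m ((m:ℝ))
  constructor
  · rw [hdet, hFval, hform1, hform2]
  · rw [hdet, hFval]
    exact div_ne_zero (Stmt16.HH_theta_ne hθ0 hθ1 m) (ne_of_gt hHm)
end

section
/- For m ≥ 1 and θ ∈ (0,1), the determinant of the m×m matrix K with entries K_{ij} = C(θ, m+1+i-j) (the case n = 2m+1) equals θ^m (θ-1)^m (θ+1)^{m-1} (θ-2)^{m-1} ··· (θ+m-1)(θ-m) divided by (m+1)^m m^m (m+2)^{m-1} (m-1)^{m-1} ··· 1·(2m), and in particular is nonzero for θ ∈ (0,1). -/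
open Matrix Finset Polynomial

namespace Stmt17

def cornerFun (n : ℕ) : Fin 2 ⊕ Fin n → Fin (n + 2) :=
  Sum.elim (fun a => if a = 0 then 0 else Fin.last (n + 1)) (fun k => (Fin.succ k).castSucc)

lemma cornerFun_bij (n : ℕ) : Function.Bijective (cornerFun n) := by
  rw [Fintype.bijective_iff_injective_and_card]
  constructor
  · intro a b h
    have hv := congrArg Fin.val h
    match a, b with
    | .inl a, .inl b =>
      congr 1
      fin_cases a <;> fin_cases b <;> simp_all [cornerFun, Fin.ext_iff, -Fin.val_eq_zero_iff]
    | .inl a, .inr b =>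
      exfalso
      fin_cases a <;> simp [cornerFun, Fin.ext_iff, -Fin.val_eq_zero_iff] at hv <;> omega
    | .inr a, .inl b =>
      exfalso
      fin_cases b <;> simp [cornerFun, Fin.ext_iff, -Fin.val_eq_zero_iff] at hv <;> omega
    | .inr a, .inr b =>
      simp only [cornerFun, Sum.elim_inr, Fin.ext_iff, Fin.coe_castSucc, Fin.val_succ] at hv
      have : a = b := by omega
      rw [this]
  · simp [add_comm]

noncomputable def cornerEquiv (n : ℕ) : Fin 2 ⊕ Fin n ≃ Fin (n + 2) :=
  Equiv.ofBijective _ (cornerFun_bij n)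

variable {R : Type*} [CommRing R]

variable {R : Type*} [CommRing R]

lemma det_two_col (n : ℕ) (v w : Fin (n+2) → R) :
    (Matrix.of fun k j => if j = 0 then v k else if j = Fin.last (n+1) then w k
      else if k = j then (1:R) else 0).det
    = v 0 * w (Fin.last (n+1)) - w 0 * v (Fin.last (n+1)) := by
  set P : Matrix (Fin (n+2)) (Fin (n+2)) R := Matrix.of fun k j =>
    if j = 0 then v k else if j = Fin.last (n+1) then w k else if k = j then (1:R) else 0 with hP
  have h0 : (Fin.last (n+1) : Fin (n+2)) ≠ 0 := by simp [Fin.ext_iff]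
  have key : P.submatrix (cornerEquiv n) (cornerEquiv n) =
      Matrix.fromBlocks !![v 0, w 0; v (Fin.last (n+1)), w (Fin.last (n+1))] 0
        (Matrix.of fun (s : Fin n) (b : Fin 2) =>
          if b = 0 then v ((Fin.succ s).castSucc) else w ((Fin.succ s).castSucc))
        (1 : Matrix (Fin n) (Fin n) R) := by
    ext x y
    match x, y with
    | .inl a, .inl b =>
      fin_cases a <;> fin_cases b <;>
        simp [hP, cornerEquiv, cornerFun, Equiv.ofBijective, h0, h0.symm]
    | .inl a, .inr k =>
      have h1 : ((Fin.succ k).castSucc : Fin (n+2)) ≠ 0 := by simp [Fin.ext_iff]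
      have h2 : ((Fin.succ k).castSucc : Fin (n+2)) ≠ Fin.last (n+1) := by
        simp [Fin.ext_iff]; omega
      fin_cases a <;>
        simp [hP, cornerEquiv, cornerFun, Equiv.ofBijective, h1, h2, h1.symm, h2.symm,
          (by simpa using h1.symm : (0 : Fin (n+2)) ≠ k.castSucc.succ),
          (by simpa using h2.symm : Fin.last (n+1) ≠ k.castSucc.succ)]
    | .inr s, .inl b =>
      fin_cases b <;> simp [hP, cornerEquiv, cornerFun, Equiv.ofBijective, h0]
    | .inr s, .inr k =>
      have h1 : ((Fin.succ k).castSucc : Fin (n+2)) ≠ 0 := by simp [Fin.ext_iff]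
      have h2 : ((Fin.succ k).castSucc : Fin (n+2)) ≠ Fin.last (n+1) := by
        simp [Fin.ext_iff]; omega
      simp [hP, cornerEquiv, cornerFun, Equiv.ofBijective, h1, h2, Matrix.one_apply,
        Fin.castSucc_inj, Fin.succ_inj]
  have := Matrix.det_submatrix_equiv_self (cornerEquiv n) P
  rw [← this, key, Matrix.det_fromBlocks_zero₁₂, Matrix.det_one, mul_one,
    Matrix.det_fin_two_of]


variable {K : Type*} [Field K]

theorem dodgson_of_ne (n : ℕ) (A : Matrix (Fin (n+2)) (Fin (n+2)) K) (hA : A.det ≠ 0) :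
    A.det * (A.submatrix (Fin.succ ∘ Fin.castSucc) (Fin.succ ∘ Fin.castSucc)).det =
      (A.submatrix Fin.succ Fin.succ).det * (A.submatrix Fin.castSucc Fin.castSucc).det -
      (A.submatrix Fin.succ Fin.castSucc).det * (A.submatrix Fin.castSucc Fin.succ).det := by
  set l : Fin (n+2) := Fin.last (n+1) with hl
  have h0l : (0 : Fin (n+2)) ≠ l := by simp [hl, Fin.ext_iff]
  set v : Fin (n+2) → K := fun k => adjugate A k 0 with hv
  set w : Fin (n+2) → K := fun k => adjugate A k l with hw
  set P : Matrix (Fin (n+2)) (Fin (n+2)) K := Matrix.of fun k j =>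
    if j = 0 then v k else if j = l then w k else if k = j then (1:K) else 0 with hP
  set e0 : Fin (n+2) → K := Pi.single 0 1 with he0
  set el : Fin (n+2) → K := Pi.single l 1 with hel
  have hAadj := Matrix.mul_adjugate A
  -- Step A : A * P = Q
  have stepA : A * P = (A.updateCol l (A.det • el)).updateCol 0 (A.det • e0) := by
    ext i j
    rw [Matrix.mul_apply]
    by_cases hj0 : j = 0
    · subst hj0
      have h1 : ∑ k, A i k * P k 0 = (A * adjugate A) i 0 := by
        rw [Matrix.mul_apply]
        refine Finset.sum_congr rfl fun k _ => ?_
        simp [hP, hv]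
      rw [h1, hAadj]
      simp [Matrix.one_apply, he0, Pi.single_apply, Matrix.smul_apply]
    · by_cases hjl : j = l
      · subst hjl
        have h1 : ∑ k, A i k * P k l = (A * adjugate A) i l := by
          rw [Matrix.mul_apply]
          refine Finset.sum_congr rfl fun k _ => ?_
          simp [hP, hw, h0l.symm]
        rw [h1, hAadj]
        simp [Matrix.one_apply, hel, Pi.single_apply, Matrix.smul_apply, updateCol_apply,
          h0l.symm]
      · have h1 : ∑ k, A i k * P k j = A i j := by
          have h2 : ∀ k, A i k * P k j = if k = j then A i k else 0 := by
            intro k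
            simp only [hP, Matrix.of_apply, hj0, hjl, if_false]
            split <;> simp
          simp_rw [h2]
          simp
        rw [h1]
        simp [updateCol_apply, hj0, hjl]
  set central := (A.submatrix (Fin.succ ∘ Fin.castSucc) (Fin.succ ∘ Fin.castSucc)).det with hcen
  have hswap : (A.updateCol l (A.det • el)).updateCol 0 e0
      = (A.updateCol 0 e0).updateCol l (A.det • el) := by
    ext i j
    by_cases hj0 : j = 0
    · subst hj0; simp [updateCol_apply, h0l, h0l.symm]
    · by_cases hjl : j = l
      · subst hjl; simp [updateCol_apply, h0l, h0l.symm]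
      · simp [updateCol_apply, hj0, hjl]
  have hCsub : ((A.updateCol 0 e0).updateCol l el).submatrix Fin.succ Fin.succ
      = (A.submatrix Fin.succ Fin.succ).updateCol (Fin.last n) (Pi.single (Fin.last n) 1) := by
    ext i j
    by_cases hjl : j = Fin.last n
    · subst hjl
      have h1 : (Fin.last n).succ = l := by rw [hl, Fin.succ_last]
      rw [submatrix_apply, h1, updateCol_apply, if_pos rfl, updateCol_apply,
        if_pos rfl, hel, Pi.single_apply, Pi.single_apply, ← h1]
      simp [Fin.succ_inj]
    · have h1 : Fin.succ j ≠ l := by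
        rw [hl, ← Fin.succ_last]; exact fun h => hjl (Fin.succ_injective _ h)
      simp [updateCol_apply, submatrix_apply, h1, Fin.succ_ne_zero, hjl]
  have hMsub : ((A.submatrix Fin.succ Fin.succ).updateCol (Fin.last n)
        (Pi.single (Fin.last n) 1)).submatrix Fin.castSucc Fin.castSucc
      = A.submatrix (Fin.succ ∘ Fin.castSucc) (Fin.succ ∘ Fin.castSucc) := by
    ext i j
    have h1 : Fin.castSucc j ≠ Fin.last n := (Fin.castSucc_lt_last j).ne
    simp [updateCol_apply, submatrix_apply, h1]
  have hdetM : ((A.submatrix Fin.succ Fin.succ).updateCol (Fin.last n)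
      (Pi.single (Fin.last n) 1)).det = central := by
    rw [Matrix.det_succ_column _ (Fin.last n)]
    rw [Finset.sum_eq_single_of_mem (Fin.last n) (Finset.mem_univ _)]
    · have hone : ((A.submatrix Fin.succ Fin.succ).updateCol (Fin.last n)
          (Pi.single (Fin.last n) 1)) (Fin.last n) (Fin.last n) = 1 := by
        simp [updateCol_apply]
      rw [hone, Fin.succAbove_last, hMsub, Fin.val_last]
      have h1 : ((-1:K)) ^ (n + n) = 1 := Even.neg_one_pow ⟨n, rfl⟩
      rw [h1, one_mul, one_mul]
    · intro b _ hb
      have hzero : ((A.submatrix Fin.succ Fin.succ).updateCol (Fin.last n)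
          (Pi.single (Fin.last n) 1)) b (Fin.last n) = 0 := by
        rw [updateCol_apply, if_pos rfl]
        simp [Pi.single_apply, hb]
      rw [hzero]
      ring
  have hdetC : ((A.updateCol 0 e0).updateCol l el).det = central := by
    rw [Matrix.det_succ_column_zero]
    rw [Finset.sum_eq_single_of_mem (0 : Fin (n+2)) (Finset.mem_univ _)]
    · have hone : ((A.updateCol 0 e0).updateCol l el) 0 0 = 1 := by
        rw [updateCol_apply, if_neg h0l, updateCol_apply, if_pos rfl]
        simp [he0]
      rw [Fin.succAbove_zero, hCsub, hdetM, hone]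
      simp
    · intro b _ hb
      have hzero : ((A.updateCol 0 e0).updateCol l el) b 0 = 0 := by
        rw [updateCol_apply, if_neg h0l, updateCol_apply, if_pos rfl]
        simp [he0, Pi.single_apply, hb]
      rw [hzero]
      ring
  have stepB : ((A.updateCol l (A.det • el)).updateCol 0 (A.det • e0)).det
      = A.det * (A.det * central) := by
    rw [Matrix.det_updateCol_smul, hswap, Matrix.det_updateCol_smul, hdetC]
  have stepC : P.det = v 0 * w l - w 0 * v l := det_two_col n v w
  have hv0 : v 0 = (A.submatrix Fin.succ Fin.succ).det := by
    show adjugate A 0 0 = _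
    rw [Matrix.adjugate_fin_succ_eq_det_submatrix]
    simp [Fin.succAbove_zero]
  have hwl : w l = (A.submatrix Fin.castSucc Fin.castSucc).det := by
    show adjugate A l l = _
    rw [Matrix.adjugate_fin_succ_eq_det_submatrix]
    rw [hl, Fin.succAbove_last]
    have : ((-1:K)) ^ ((Fin.last (n+1) : Fin (n+2)) + (Fin.last (n+1) : Fin (n+2)) : ℕ) = 1 :=
      Even.neg_one_pow ⟨(Fin.last (n+1) : Fin (n+2)), rfl⟩
    rw [this, one_mul]
  have hvl : v l = (-1:K) ^ (n+1) * (A.submatrix Fin.succ Fin.castSucc).det := by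
    show adjugate A l 0 = _
    rw [Matrix.adjugate_fin_succ_eq_det_submatrix]
    rw [hl, Fin.succAbove_zero, Fin.succAbove_last]
    norm_num
  have hw0 : w 0 = (-1:K) ^ (n+1) * (A.submatrix Fin.castSucc Fin.succ).det := by
    show adjugate A 0 l = _
    rw [Matrix.adjugate_fin_succ_eq_det_submatrix]
    rw [hl, Fin.succAbove_zero, Fin.succAbove_last]
    norm_num
  have hsq : ((-1:K)^(n+1)) * ((-1:K)^(n+1)) = 1 := by
    rw [← pow_add]; exact Even.neg_one_pow ⟨n+1, rfl⟩
  have h2 : A.det * P.det = A.det * (A.det * central) := by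
    rw [← Matrix.det_mul, stepA, stepB]
  apply mul_left_cancel₀ hA
  rw [← stepB, ← stepA, Matrix.det_mul, stepC, hv0, hwl, hvl, hw0]
  linear_combination (-(A.det * (A.submatrix Fin.castSucc Fin.succ).det *
    (A.submatrix Fin.succ Fin.castSucc).det)) * hsq


noncomputable def ddg {R : Type*} [CommRing R] (n : ℕ)
    (M : Matrix (Fin (n+2)) (Fin (n+2)) R) : R :=
  M.det * (M.submatrix (Fin.succ ∘ Fin.castSucc) (Fin.succ ∘ Fin.castSucc)).det -
    ((M.submatrix Fin.succ Fin.succ).det * (M.submatrix Fin.castSucc Fin.castSucc).det -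
      (M.submatrix Fin.succ Fin.castSucc).det * (M.submatrix Fin.castSucc Fin.succ).det)

lemma ddg_map {R S : Type*} [CommRing R] [CommRing S] (g : R →+* S) (n : ℕ)
    (M : Matrix (Fin (n+2)) (Fin (n+2)) R) : ddg n (M.map g) = g (ddg n M) := by
  have h1 : ∀ {k : ℕ} (r c : Fin k → Fin (n+2)),
      ((M.map g).submatrix r c).det = g ((M.submatrix r c).det) := by
    intro k r c
    rw [Matrix.submatrix_map, RingHom.map_det, RingHom.mapMatrix_apply]
  have h0 : (M.map g).det = g M.det := by
    rw [RingHom.map_det, RingHom.mapMatrix_apply]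
  rw [ddg, ddg, h1, h1, h1, h1, h1, h0, ← g.map_mul, ← g.map_mul, ← g.map_mul, ← g.map_sub,
    ← g.map_sub]


theorem dodgson (n : ℕ) (A : Matrix (Fin (n+2)) (Fin (n+2)) ℝ) :
    A.det * (A.submatrix (Fin.succ ∘ Fin.castSucc) (Fin.succ ∘ Fin.castSucc)).det =
      (A.submatrix Fin.succ Fin.succ).det * (A.submatrix Fin.castSucc Fin.castSucc).det -
      (A.submatrix Fin.succ Fin.castSucc).det * (A.submatrix Fin.castSucc Fin.succ).det := by
  classical
  set B : Matrix (Fin (n+2)) (Fin (n+2)) (Polynomial ℝ) := charmatrix (-A) with hB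
  have hdetB : B.det ≠ 0 := (Matrix.charpoly_monic (-A)).ne_zero
  set K := FractionRing (Polynomial ℝ)
  set f : Polynomial ℝ →+* K := algebraMap (Polynomial ℝ) K with hfdef
  have hf : Function.Injective f := IsFractionRing.injective (Polynomial ℝ) K
  have hfd : (B.map f).det ≠ 0 := by
    have h0 : (B.map f).det = f B.det := by rw [RingHom.map_det, RingHom.mapMatrix_apply]
    rw [h0]
    exact (map_ne_zero_iff f hf).mpr hdetB
  have hDf : ddg n (B.map f) = 0 := by
    rw [ddg, sub_eq_zero]
    exact dodgson_of_ne n (B.map f) hfd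
  have hDB : ddg n B = 0 := by
    apply hf
    rw [← ddg_map f n B, hDf, map_zero]
  have hBA : B.map (Polynomial.evalRingHom (0:ℝ)) = A := by
    ext i j
    by_cases h : i = j
    · subst h
      simp [hB, charmatrix_apply_eq]
    · simp [hB, charmatrix_apply_ne _ _ _ h]
  have hDA : ddg n A = 0 := by
    rw [← hBA, ddg_map, hDB, map_zero]
  rw [ddg, sub_eq_zero] at hDA
  exact hDA


noncomputable def Nf (θ : ℝ) (c i : ℕ) : ℝ := ∏ j ∈ range c, (θ - c + i + j + 1)
noncomputable def Df (c i : ℕ) : ℝ := ∏ j ∈ range c, ((i : ℝ) + j + 1)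
noncomputable def Fv (θ : ℝ) (c r : ℕ) : ℝ := ∏ i ∈ range r, (Nf θ c i / Df c i)

lemma T1 (x : ℝ) (k : ℕ) :
    (∏ i ∈ range k, (x + i)) * (x + k) = x * ∏ i ∈ range k, (x + 1 + i) := by
  have h2 := Finset.prod_range_succ' (fun i => x + (i : ℝ)) k
  rw [Finset.prod_range_succ (fun i => x + (i : ℝ)) k] at h2
  have h3 : ∏ i ∈ range k, (x + (↑(i + 1) : ℝ)) = ∏ i ∈ range k, (x + 1 + i) := by
    refine prod_congr rfl fun i _ => ?_
    push_cast; ring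
  rw [h3] at h2
  rw [h2]
  push_cast; ring

lemma Nf_succ (θ : ℝ) (c i : ℕ) : Nf θ (c+1) i = (θ - c + i) * Nf θ c i := by
  rw [Nf, Finset.prod_range_succ' (fun j => (θ - (↑(c+1) : ℝ) + i + j + 1))]
  have h1 : ∏ j ∈ range c, (θ - (↑(c+1) : ℝ) + i + ↑(j+1) + 1) = Nf θ c i := by
    refine prod_congr rfl fun j _ => ?_
    push_cast; ring
  rw [h1, mul_comm]
  congr 1
  push_cast; ring

lemma Df_succ (c i : ℕ) : Df (c+1) i = Df c i * ((i : ℝ) + c + 1) := by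
  rw [Df, Finset.prod_range_succ]
  rfl

lemma Fv_succ (θ : ℝ) (c r : ℕ) : Fv θ c (r+1) = Fv θ c r * (Nf θ c r / Df c r) :=
  Finset.prod_range_succ _ _

lemma Fv_shift (θ : ℝ) (c k : ℕ) :
    Fv θ (c+1) k = Fv θ c k * ∏ i ∈ range k, ((θ - c + i) / ((c : ℝ) + i + 1)) := by
  rw [Fv, Fv, ← Finset.prod_mul_distrib]
  refine prod_congr rfl fun i _ => ?_
  rw [Nf_succ, Df_succ, div_mul_div_comm]
  ring

lemma Nf_ne (θ : ℝ) (hθ0 : 0 < θ) (hθ1 : θ < 1) (c i : ℕ) : Nf θ c i ≠ 0 := by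
  rw [Nf, Finset.prod_ne_zero_iff]
  intro j _
  rcases le_or_gt c (i + j + 1) with h | h
  · have : (c : ℝ) ≤ (i : ℝ) + j + 1 := by exact_mod_cast h
    nlinarith
  · have : (i : ℝ) + j + 1 + 1 ≤ (c : ℝ) := by exact_mod_cast h
    nlinarith

lemma Df_pos (c i : ℕ) : 0 < Df c i := by
  rw [Df]
  apply Finset.prod_pos
  intro j _
  positivity

lemma Fv_ne (θ : ℝ) (hθ0 : 0 < θ) (hθ1 : θ < 1) (c r : ℕ) : Fv θ c r ≠ 0 := by
  rw [Fv, Finset.prod_ne_zero_iff]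
  exact fun i _ => div_ne_zero (Nf_ne θ hθ0 hθ1 c i) (Df_pos c i).ne'

lemma key_ratio (θ dR rR N1 D1 N2 D2 NU DU NV DV : ℝ)
    (hN : N1 * (θ + rR + 1) = (θ - dR + rR) * N2)
    (hD : D1 * (rR + dR + 2) = (rR + 1) * D2)
    (hNU : NU * (θ - dR + rR) = (θ - dR - 1) * NV)
    (hDU : DV * (dR + rR + 2) = (dR + 1) * DU)
    (hD1 : D1 ≠ 0) (hD2 : D2 ≠ 0) (hDU' : DU ≠ 0) (hDV : DV ≠ 0)
    (hx : θ - dR + rR ≠ 0) (hth : θ + rR + 1 ≠ 0)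
    (hr1 : rR + 1 ≠ 0) (hd1 : dR + 1 ≠ 0) (hdr : rR + dR + 2 ≠ 0) :
    N2 / D2 * (NV / DV) = N1 / D1 * (NV / DV) - N1 / D1 * (NU / DU) := by
  have eN1 : N1 = (θ - dR + rR) * N2 / (θ + rR + 1) := by
    rw [eq_div_iff hth]; linarith [hN]
  have eD1 : D1 = (rR + 1) * D2 / (rR + dR + 2) := by
    rw [eq_div_iff hdr]; linarith [hD]
  have eNU : NU = (θ - dR - 1) * NV / (θ - dR + rR) := by
    rw [eq_div_iff hx]; linarith [hNU]
  have eDV : DV = (dR + 1) * DU / (dR + rR + 2) := by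
    rw [eq_div_iff]
    · linarith [hDU]
    · intro h; apply hdr; linarith
  subst eN1 eD1 eNU eDV
  field_simp
  ring

lemma star (θ : ℝ) (hθ0 : 0 < θ) (hθ1 : θ < 1) (d r : ℕ) (hd : r + 2 ≤ d) :
    Fv θ (d+1) (r+2) * Fv θ (d+1) r =
      Fv θ (d+1) (r+1) * Fv θ (d+1) (r+1) - Fv θ (d+2) (r+1) * Fv θ d (r+1) := by
  have hdR : (r : ℝ) + 2 ≤ (d : ℝ) := by exact_mod_cast hd
  set G := Fv θ (d+1) r with hG
  set q1 := Nf θ (d+1) r / Df (d+1) r with hq1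
  set q2 := Nf θ (d+1) (r+1) / Df (d+1) (r+1) with hq2
  set NU := ∏ i ∈ range (r+1), (θ - (↑(d+1) : ℝ) + i) with hNUdef
  set DU := ∏ i ∈ range (r+1), ((↑(d+1) : ℝ) + i + 1) with hDUdef
  set NV := ∏ i ∈ range (r+1), (θ - (d : ℝ) + i) with hNVdef
  set DV := ∏ i ∈ range (r+1), ((d : ℝ) + i + 1) with hDVdef
  have hF1 : Fv θ (d+1) (r+1) = G * q1 := Fv_succ θ (d+1) r
  have hF2 : Fv θ (d+1) (r+2) = G * q1 * q2 := by
    rw [Fv_succ θ (d+1) (r+1), Fv_succ θ (d+1) r]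
  have hU : Fv θ (d+2) (r+1) = G * q1 * (NU / DU) := by
    rw [show d+2 = (d+1)+1 from rfl, Fv_shift θ (d+1) (r+1), Finset.prod_div_distrib,
      ← hNUdef, ← hDUdef, hF1]
  have hV : Fv θ (d+1) (r+1) = Fv θ d (r+1) * (NV / DV) := by
    rw [Fv_shift θ d (r+1), Finset.prod_div_distrib, ← hNVdef, ← hDVdef]
  have hDU_pos : 0 < DU := by
    rw [hDUdef]; apply Finset.prod_pos; intro i _; positivity
  have hDV_pos : 0 < DV := by
    rw [hDVdef]; apply Finset.prod_pos; intro i _; positivity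
  have hNV_ne : NV ≠ 0 := by
    rw [hNVdef, Finset.prod_ne_zero_iff]
    intro i hi
    have hir : (i : ℝ) ≤ r := by
      have := Finset.mem_range.mp hi
      exact_mod_cast Nat.lt_succ_iff.mp this
    intro h; nlinarith
  have hv_ne : NV / DV ≠ 0 := div_ne_zero hNV_ne hDV_pos.ne'
  -- telescoping identities
  have hN : Nf θ (d+1) r * (θ + r + 1) = (θ - d + r) * Nf θ (d+1) (r+1) := by
    have e1 : Nf θ (d+1) r = ∏ j ∈ range (d+1), ((θ - d + r) + j) := by
      rw [Nf]; refine prod_congr rfl fun j _ => ?_; push_cast; ring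
    have e2 : Nf θ (d+1) (r+1) = ∏ j ∈ range (d+1), ((θ - d + r) + 1 + j) := by
      rw [Nf]; refine prod_congr rfl fun j _ => ?_; push_cast; ring
    have e4 : (θ - d + r) + (↑(d+1) : ℝ) = θ + r + 1 := by push_cast; ring
    rw [e1, e2, ← e4]
    exact T1 _ _
  have hD : Df (d+1) r * ((r : ℝ) + d + 2) = ((r : ℝ) + 1) * Df (d+1) (r+1) := by
    have e1 : Df (d+1) r = ∏ j ∈ range (d+1), (((r : ℝ) + 1) + j) := by
      rw [Df]; refine prod_congr rfl fun j _ => ?_; push_cast; ring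
    have e2 : Df (d+1) (r+1) = ∏ j ∈ range (d+1), (((r : ℝ) + 1) + 1 + j) := by
      rw [Df]; refine prod_congr rfl fun j _ => ?_; push_cast; ring
    have e4 : ((r : ℝ) + 1) + (↑(d+1) : ℝ) = (r : ℝ) + d + 2 := by push_cast; ring
    rw [e1, e2, ← e4]
    exact T1 _ _
  have hNUt : NU * (θ - d + r) = (θ - d - 1) * NV := by
    have e1 : NU = ∏ i ∈ range (r+1), ((θ - d - 1) + i) := by
      rw [hNUdef]; refine prod_congr rfl fun i _ => ?_; push_cast; ring
    have e2 : NV = ∏ i ∈ range (r+1), ((θ - d - 1) + 1 + i) := by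
      rw [hNVdef]; refine prod_congr rfl fun i _ => ?_; push_cast; ring
    have e4 : (θ - d - 1) + (↑(r+1) : ℝ) = θ - d + r := by push_cast; ring
    rw [e1, e2, ← e4]
    exact T1 _ _
  have hDUt : DV * ((d : ℝ) + r + 2) = ((d : ℝ) + 1) * DU := by
    have e1 : DV = ∏ i ∈ range (r+1), (((d : ℝ) + 1) + i) := by
      rw [hDVdef]; refine prod_congr rfl fun i _ => ?_; push_cast; ring
    have e2 : DU = ∏ i ∈ range (r+1), (((d : ℝ) + 1) + 1 + i) := by
      rw [hDUdef]; refine prod_congr rfl fun i _ => ?_; push_cast; ring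
    have e4 : ((d : ℝ) + 1) + (↑(r+1) : ℝ) = (d : ℝ) + r + 2 := by push_cast; ring
    rw [e1, e2, ← e4]
    exact T1 _ _
  have hkey := key_ratio θ d r (Nf θ (d+1) r) (Df (d+1) r) (Nf θ (d+1) (r+1))
    (Df (d+1) (r+1)) NU DU NV DV hN hD hNUt hDUt
    (Df_pos (d+1) r).ne' (Df_pos (d+1) (r+1)).ne' hDU_pos.ne' hDV_pos.ne'
    (by nlinarith) (by positivity) (by positivity) (by positivity) (by positivity)
  have hFd : Fv θ d (r+1) * (NV / DV) = G * q1 := by rw [← hV, hF1]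
  rw [hF2, hF1, hU]
  apply mul_right_cancel₀ hv_ne
  linear_combination (G * G * q1) * hkey + (G * q1 * (NU / DU)) * hFd


noncomputable def Km (θ : ℝ) (c r : ℕ) : Matrix (Fin r) (Fin r) ℝ :=
  Matrix.of fun i j => gchoose θ (c + (i : ℕ) - (j : ℕ))

lemma Km_SS (θ : ℝ) (c r : ℕ) :
    (Km θ c (r+2)).submatrix Fin.succ Fin.succ = Km θ c (r+1) := by
  ext i j
  simp only [Km, submatrix_apply, Matrix.of_apply, Fin.val_succ]
  congr 1
  omega

lemma Km_CC (θ : ℝ) (c r : ℕ) :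
    (Km θ c (r+2)).submatrix Fin.castSucc Fin.castSucc = Km θ c (r+1) := by
  ext i j
  simp only [Km, submatrix_apply, Matrix.of_apply, Fin.coe_castSucc]

lemma Km_SC (θ : ℝ) (c r : ℕ) :
    (Km θ c (r+2)).submatrix Fin.succ Fin.castSucc = Km θ (c+1) (r+1) := by
  ext i j
  simp only [Km, submatrix_apply, Matrix.of_apply, Fin.val_succ, Fin.coe_castSucc]
  congr 1
  omega

lemma Km_CS (θ : ℝ) (c r : ℕ) (hc : 1 ≤ c) :
    (Km θ (c+1) (r+2)).submatrix Fin.castSucc Fin.succ = Km θ c (r+1) := by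
  ext i j
  simp only [Km, submatrix_apply, Matrix.of_apply, Fin.val_succ, Fin.coe_castSucc]
  congr 1
  omega

lemma Km_cen (θ : ℝ) (c r : ℕ) :
    (Km θ c (r+2)).submatrix (Fin.succ ∘ Fin.castSucc) (Fin.succ ∘ Fin.castSucc)
      = Km θ c r := by
  ext i j
  simp only [Km, submatrix_apply, Matrix.of_apply, Function.comp_apply, Fin.val_succ,
    Fin.coe_castSucc]
  congr 1
  omega

lemma Df_zero_eq (c : ℕ) : Df c 0 = (Nat.factorial c : ℝ) := by
  induction c with
  | zero => simp [Df]
  | succ n ih =>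
    rw [Df, Finset.prod_range_succ, ← Df, ih, Nat.factorial_succ]
    push_cast
    ring

lemma gchoose_eq (θ : ℝ) (c : ℕ) : gchoose θ c = Nf θ c 0 / Df c 0 := by
  rw [gchoose, Df_zero_eq]
  congr 1
  rw [Nf, ← Finset.prod_range_reflect]
  refine prod_congr rfl fun j hj => ?_
  have hj' : j < c := Finset.mem_range.mp hj
  have : ((c - 1 - j : ℕ) : ℝ) = (c : ℝ) - 1 - j := by
    have h1 : c - 1 - j = c - (1 + j) := by omega
    rw [h1, Nat.cast_sub (by omega)]
    push_cast
    ring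
  rw [this]
  push_cast
  ring

lemma main (θ : ℝ) (hθ0 : 0 < θ) (hθ1 : θ < 1) :
    ∀ r c : ℕ, r + 1 ≤ c → (Km θ c r).det = Fv θ c r := by
  intro r
  induction r using Nat.strong_induction_on with
  | _ r ih =>
    match r with
    | 0 =>
      intro c _
      have : (Km θ c 0).det = 1 := Matrix.det_fin_zero
      rw [this, Fv]
      simp
    | 1 =>
      intro c _
      rw [Matrix.det_fin_one]
      show gchoose θ (c + (0:ℕ) - (0:ℕ)) = _
      rw [Fv, Finset.prod_range_one, ← gchoose_eq]
      norm_num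
    | (r+2) =>
      intro c hc
      obtain ⟨d, rfl⟩ : ∃ d, c = d + 1 := ⟨c - 1, by omega⟩
      have hd : r + 2 ≤ d := by omega
      have h1 := ih r (by omega) (d+1) (by omega)
      have h2 := ih (r+1) (by omega) (d+1) (by omega)
      have h3 := ih (r+1) (by omega) (d+2) (by omega)
      have h4 := ih (r+1) (by omega) d (by omega)
      have hdodg := dodgson r (Km θ (d+1) (r+2))
      rw [Km_cen, Km_SS, Km_CC, Km_SC, Km_CS θ d r (by omega), h1, h2, h3, h4] at hdodg
      have hstar := star θ hθ0 hθ1 d r hd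
      exact mul_right_cancel₀ (Fv_ne θ hθ0 hθ1 (d+1) r) (hdodg.trans hstar.symm)


lemma triangle (m : ℕ) (F : ℕ → ℕ → ℝ) :
    ∏ i ∈ range m, ∏ k ∈ range (m - i), F i k
      = ∏ k ∈ range m, ∏ i ∈ range (m - k), F i k := by
  rw [Finset.prod_sigma', Finset.prod_sigma']
  refine Finset.prod_nbij' (fun p => ⟨p.2, p.1⟩) (fun p => ⟨p.2, p.1⟩) ?_ ?_ ?_ ?_ ?_ <;>
    simp only [Finset.mem_sigma, Finset.mem_range] <;>
    first
      | (rintro ⟨a, b⟩ h; omega)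
      | (rintro ⟨a, b⟩ h; rfl)
      | (rintro ⟨a, b⟩ h; simp)

lemma num_eq (θ : ℝ) (m : ℕ) :
    ∏ i ∈ range m, Nf θ (m+1) i = ∏ k ∈ range m, ((θ + k) * (θ - 1 - k)) ^ (m - k) := by
  have row : ∀ i, i < m → Nf θ (m+1) i
      = (∏ k ∈ range (m-i), (θ - 1 - k)) * (∏ k ∈ range (i+1), (θ + k)) := by
    intro i hi
    rw [Nf, show m + 1 = (m - i) + (i + 1) by omega, Finset.prod_range_add]
    congr 1
    · rw [← Finset.prod_range_reflect (fun k => θ - 1 - (k:ℝ)) (m - i)]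
      refine prod_congr rfl fun j hj => ?_
      have hj' : j < m - i := Finset.mem_range.mp hj
      have h1 : ((m - i - 1 - j : ℕ) : ℝ) = (m : ℝ) - i - 1 - j := by
        rw [Nat.cast_sub (by omega), Nat.cast_sub (by omega), Nat.cast_sub (by omega)]
        push_cast; ring
      rw [h1]
      rw [show ((m - i) + (i+1) : ℕ) = m + 1 by omega]
      push_cast; ring
    · refine prod_congr rfl fun j hj => ?_
      have h1 : ((m - i + j : ℕ) : ℝ) = (m : ℝ) - i + j := by
        rw [Nat.cast_add, Nat.cast_sub (by omega)]
      rw [h1, show ((m - i) + (i+1) : ℕ) = m + 1 by omega]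
      push_cast; ring
  rw [Finset.prod_congr rfl (fun i hi => row i (Finset.mem_range.mp hi)),
    Finset.prod_mul_distrib]
  have refl2 : ∏ i ∈ range m, ∏ k ∈ range (i+1), (θ + k)
      = ∏ i ∈ range m, ∏ k ∈ range (m - i), (θ + k) := by
    rw [← Finset.prod_range_reflect (fun i => ∏ k ∈ range (m - i), (θ + (k:ℝ))) m]
    refine prod_congr rfl fun i hi => ?_
    have hi' : i < m := Finset.mem_range.mp hi
    rw [show m - (m - 1 - i) = i + 1 by omega]
  rw [refl2, ← Finset.prod_mul_distrib]
  have comb : ∀ i ∈ range m,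
      (∏ k ∈ range (m-i), (θ - 1 - (k:ℝ))) * (∏ k ∈ range (m-i), (θ + (k:ℝ)))
        = ∏ k ∈ range (m-i), ((θ + k) * (θ - 1 - k)) := by
    intro i _
    rw [← Finset.prod_mul_distrib]
    exact prod_congr rfl fun k _ => by ring
  rw [Finset.prod_congr rfl comb, triangle]
  exact prod_congr rfl fun k _ => by rw [Finset.prod_const, Finset.card_range]

lemma den_eq (m : ℕ) :
    ∏ i ∈ range m, Df (m+1) i
      = ∏ k ∈ range m, (((m:ℝ) + 1 + k) * ((m:ℝ) - k)) ^ (m - k) := by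
  have row : ∀ i, i < m → Df (m+1) i
      = (∏ k ∈ range (m-i), ((m:ℝ) - k)) * (∏ k ∈ range (i+1), ((m:ℝ) + 1 + k)) := by
    intro i hi
    rw [Df, show m + 1 = (m - i) + (i + 1) by omega, Finset.prod_range_add]
    congr 1
    · rw [← Finset.prod_range_reflect (fun k => (m:ℝ) - (k:ℝ)) (m - i)]
      refine prod_congr rfl fun j hj => ?_
      have hj' : j < m - i := Finset.mem_range.mp hj
      have h1 : ((m - i - 1 - j : ℕ) : ℝ) = (m : ℝ) - i - 1 - j := by
        rw [Nat.cast_sub (by omega), Nat.cast_sub (by omega), Nat.cast_sub (by omega)]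
        push_cast; ring
      rw [h1]
      push_cast; ring
    · refine prod_congr rfl fun j hj => ?_
      have h1 : ((m - i + j : ℕ) : ℝ) = (m : ℝ) - i + j := by
        rw [Nat.cast_add, Nat.cast_sub (by omega)]
      rw [h1]
      push_cast; ring
  rw [Finset.prod_congr rfl (fun i hi => row i (Finset.mem_range.mp hi)),
    Finset.prod_mul_distrib]
  have refl2 : ∏ i ∈ range m, ∏ k ∈ range (i+1), ((m:ℝ) + 1 + k)
      = ∏ i ∈ range m, ∏ k ∈ range (m - i), ((m:ℝ) + 1 + k) := by
    rw [← Finset.prod_range_reflect (fun i => ∏ k ∈ range (m - i), ((m:ℝ) + 1 + (k:ℝ))) m]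
    refine prod_congr rfl fun i hi => ?_
    have hi' : i < m := Finset.mem_range.mp hi
    rw [show m - (m - 1 - i) = i + 1 by omega]
  rw [refl2, ← Finset.prod_mul_distrib]
  have comb : ∀ i ∈ range m,
      (∏ k ∈ range (m-i), ((m:ℝ) - (k:ℝ))) * (∏ k ∈ range (m-i), ((m:ℝ) + 1 + (k:ℝ)))
        = ∏ k ∈ range (m-i), (((m:ℝ) + 1 + k) * ((m:ℝ) - k)) := by
    intro i _
    rw [← Finset.prod_mul_distrib]
    exact prod_congr rfl fun k _ => by ring
  rw [Finset.prod_congr rfl comb, triangle]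
  exact prod_congr rfl fun k _ => by rw [Finset.prod_const, Finset.card_range]

lemma Fv_final (θ : ℝ) (m : ℕ) :
    Fv θ (m+1) m = (∏ k ∈ Finset.range m, ((θ + k) * (θ - 1 - k)) ^ (m - k)) /
        (∏ k ∈ Finset.range m, (((m : ℝ) + 1 + k) * ((m : ℝ) - k)) ^ (m - k)) := by
  rw [Fv, Finset.prod_div_distrib, num_eq, den_eq]


end Stmt17

theorem stmt_17 (m : ℕ) (hm : 1 ≤ m) (θ : ℝ) (hθ0 : 0 < θ) (hθ1 : θ < 1)
    (K : Matrix (Fin m) (Fin m) ℝ)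
    (hK : ∀ i j : Fin m, K i j = gchoose θ (m + 1 + (i : ℕ) - (j : ℕ))) :
    K.det = (∏ k ∈ Finset.range m, ((θ + k) * (θ - 1 - k)) ^ (m - k)) /
        (∏ k ∈ Finset.range m, (((m : ℝ) + 1 + k) * ((m : ℝ) - k)) ^ (m - k)) ∧
      K.det ≠ 0 := by
  have hKm : K = Stmt17.Km θ (m+1) m := by
    ext i j
    rw [hK]
    rfl
  have hdet : K.det = Stmt17.Fv θ (m+1) m := by
    rw [hKm]
    exact Stmt17.main θ hθ0 hθ1 m (m+1) le_rfl
  refine ⟨?_, ?_⟩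
  · rw [hdet, Stmt17.Fv_final]
  · rw [hdet]
    exact Stmt17.Fv_ne θ hθ0 hθ1 _ _
end

section
/- Let m ∈ ℕ and let A_m be the m×m matrix with entries (A_m)_{ab} = C(m+1, 2a-b) (binomial coefficient, zero when 2a-b < 0 or > m+1). Then det A_m = 2^{m(m+1)/2}. -/
open Polynomial Matrix Finset

namespace Stmt18

noncomputable def EO : ℕ → Polynomial ℤ × Polynomial ℤ
  | 0 => (1, 0)
  | n + 1 => ((EO n).1 + X * (EO n).2, (EO n).1 + (EO n).2)

noncomputable def Ep (n : ℕ) : Polynomial ℤ := (EO n).1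
noncomputable def Op (n : ℕ) : Polynomial ℤ := (EO n).2

lemma Ep_succ (n : ℕ) : Ep (n + 1) = Ep n + X * Op n := rfl
lemma Op_succ (n : ℕ) : Op (n + 1) = Ep n + Op n := rfl
lemma Ep_zero : Ep 0 = 1 := rfl
lemma Op_zero : Op 0 = 0 := rfl

lemma EO_comp (n : ℕ) :
    ((1 + X : ℤ[X])) ^ n = (Ep n).comp (X ^ 2) + X * (Op n).comp (X ^ 2) ∧
    ((1 - X : ℤ[X])) ^ n = (Ep n).comp (X ^ 2) - X * (Op n).comp (X ^ 2) := by
  induction n with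
  | zero => simp [Ep_zero, Op_zero]
  | succ n ih =>
    obtain ⟨h1, h2⟩ := ih
    constructor
    · rw [pow_succ, h1, Ep_succ, Op_succ]
      simp only [add_comp, mul_comp, X_comp]
      ring
    · rw [pow_succ, h2, Ep_succ, Op_succ]
      simp only [add_comp, mul_comp, X_comp]
      ring

lemma EO_eval (n : ℕ) : (Ep (n + 1)).eval 1 = 2 ^ n ∧ (Op (n + 1)).eval 1 = 2 ^ n := by
  induction n with
  | zero => simp [Ep_succ, Op_succ, Ep_zero, Op_zero]
  | succ n ih =>
    obtain ⟨h1, h2⟩ := ih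
    constructor
    · rw [Ep_succ]; simp [h1, h2]; ring
    · rw [Op_succ]; simp [h1, h2]; ring

lemma EO_natDegree (n : ℕ) :
    (Ep (n + 1)).natDegree ≤ (n + 1) / 2 ∧ (Op (n + 1)).natDegree ≤ n / 2 := by
  induction n with
  | zero =>
    constructor
    · rw [Ep_succ, Ep_zero, Op_zero]; simp
    · rw [Op_succ, Ep_zero, Op_zero]; simp
  | succ n ih =>
    obtain ⟨h1, h2⟩ := ih
    constructor
    · rw [Ep_succ]
      refine (natDegree_add_le _ _).trans ?_
      have := (natDegree_mul_le (p := (X : ℤ[X])) (q := Op (n + 1)))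
      simp only [natDegree_X] at this
      omega
    · rw [Op_succ]
      refine (natDegree_add_le _ _).trans ?_
      omega

lemma coeff_comp_neg (p : ℤ[X]) (n : ℕ) : (p.comp (-X)).coeff n = (-1) ^ n * p.coeff n := by
  induction p using Polynomial.induction_on' with
  | add p q hp hq => simp [add_comp, hp, hq, mul_add]
  | monomial t a =>
    have h1 : ((monomial t a : ℤ[X]).comp (-X)) = C ((-1) ^ t * a) * X ^ t := by
      rw [← C_mul_X_pow_eq_monomial, mul_comp, C_comp, pow_comp, X_comp, neg_pow]
      simp only [C_mul, C_pow, C_neg, C_1]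
      ring
    rw [h1, coeff_C_mul, coeff_X_pow, ← C_mul_X_pow_eq_monomial, coeff_C_mul, coeff_X_pow]
    rcases eq_or_ne n t with h | h
    · subst h; simp [mul_comm]
    · simp [h]

lemma coeff_comp_sq (p : ℤ[X]) (n : ℕ) : (p.comp (X ^ 2)).coeff (2 * n) = p.coeff n := by
  induction p using Polynomial.induction_on' with
  | add p q hp hq => simp [add_comp, hp, hq]
  | monomial t a =>
    rw [← C_mul_X_pow_eq_monomial]
    simp only [mul_comp, pow_comp, C_comp, X_comp, ← pow_mul, coeff_C_mul, coeff_X_pow]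
    rcases eq_or_ne n t with h | h
    · subst h; simp
    · rw [if_neg h, if_neg (by omega)]

lemma coeff_one_sub_pow (t r : ℕ) :
    (((1 : ℤ[X]) - X) ^ t).coeff r = (-1) ^ r * (t.choose r : ℤ) := by
  have h : ((1 : ℤ[X]) - X) ^ t = (((1 : ℤ[X]) + X) ^ t).comp (-X) := by
    simp [pow_comp, add_comp, one_comp, X_comp, sub_eq_add_neg]
  rw [h, coeff_comp_neg, coeff_one_add_X_pow]


/-- The `Y`-polynomial whose coefficients give the columns of `A * U`. -/
noncomputable def w (m k : ℕ) : ℤ[X] :=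
  X ^ ((k + 1) / 2 - 1) * (1 - X) ^ (m - k) *
    (if k % 2 = 0 then Ep (k + 1) else Op (k + 1))

lemma key1 (m k : ℕ) (h1 : 1 ≤ k) (h2 : k ≤ m) :
    ((1 - X : ℤ[X]) ^ (m - k) * X ^ k * (1 + X) ^ (m + 1)) +
      ((1 - X : ℤ[X]) ^ (m - k) * X ^ k * (1 + X) ^ (m + 1)).comp (-X) =
      2 * (X * w m k).comp (X ^ 2) := by
  have hcomp : ((1 - X : ℤ[X]) ^ (m - k) * X ^ k * (1 + X) ^ (m + 1)).comp (-X) =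
      (1 + X) ^ (m - k) * ((-X) ^ k) * (1 - X) ^ (m + 1) := by
    simp only [mul_comp, pow_comp, sub_comp, add_comp, one_comp, X_comp, sub_neg_eq_add]
    ring
  obtain ⟨hEp, hOp⟩ := EO_comp (k + 1)
  have hsp : ((1 : ℤ[X]) + X) ^ (m + 1) = (1 + X) ^ (m - k) * (1 + X) ^ (k + 1) := by
    rw [← pow_add]; congr 1; omega
  have hsm : ((1 : ℤ[X]) - X) ^ (m + 1) = (1 - X) ^ (m - k) * (1 - X) ^ (k + 1) := by
    rw [← pow_add]; congr 1; omega
  have hsq : ((1 : ℤ[X]) - X ^ 2) ^ (m - k) = (1 - X) ^ (m - k) * (1 + X) ^ (m - k) := by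
    rw [← mul_pow]; congr 1; ring
  rcases Nat.even_or_odd k with ⟨s, hs⟩ | ⟨s, hs⟩
  · -- k = s + s, s ≥ 1
    subst hs
    have hs1 : 1 ≤ s := by omega
    have hwc : (X * w m (s + s)).comp (X ^ 2) =
        (X ^ 2) ^ s * ((1 : ℤ[X]) - X ^ 2) ^ (m - (s + s)) *
          (Ep (s + s + 1)).comp (X ^ 2) := by
      rw [w, if_pos (by omega), show (s + s + 1) / 2 - 1 = s - 1 by omega]
      simp only [mul_comp, pow_comp, sub_comp, one_comp, X_comp]
      rw [show ((X : ℤ[X]) ^ 2) ^ s = X ^ 2 * (X ^ 2) ^ (s - 1) by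
        rw [← pow_succ']; congr 1; omega]
      ring
    rw [hcomp, hwc, hsp, hsm, hEp, hOp, hsq]
    rw [show ((-X : ℤ[X])) ^ (s + s) = X ^ (s + s) by
      rw [neg_pow, Even.neg_one_pow ⟨s, rfl⟩, one_mul]]
    rw [show ((X : ℤ[X]) ^ 2) ^ s = X ^ (s + s) by rw [← pow_mul]; congr 1; omega]
    ring
  · -- k = 2s + 1
    subst hs
    have hwc : (X * w m (2 * s + 1)).comp (X ^ 2) =
        (X ^ 2) ^ (s + 1) * ((1 : ℤ[X]) - X ^ 2) ^ (m - (2 * s + 1)) *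
          (Op (2 * s + 1 + 1)).comp (X ^ 2) := by
      rw [w, if_neg (by omega), show (2 * s + 1 + 1) / 2 - 1 = s by omega]
      simp only [mul_comp, pow_comp, sub_comp, one_comp, X_comp]
      rw [show ((X : ℤ[X]) ^ 2) ^ (s + 1) = X ^ 2 * (X ^ 2) ^ s by rw [← pow_succ']]
      ring
    rw [hcomp, hwc, hsp, hsm, hEp, hOp, hsq]
    rw [show ((-X : ℤ[X])) ^ (2 * s + 1) = -X ^ (2 * s + 1) by
      rw [neg_pow, Odd.neg_one_pow ⟨s, by omega⟩]; ring]
    rw [show ((X : ℤ[X]) ^ 2) ^ (s + 1) = X * X ^ (2 * s + 1) by ring]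
    ring

lemma coeffP (m k : ℕ) (h1 : 1 ≤ k) (h2 : k ≤ m) (i : ℕ) :
    ((1 - X : ℤ[X]) ^ (m - k) * X ^ k * (1 + X) ^ (m + 1)).coeff (2 * i + 2) =
      (w m k).coeff i := by
  have hk := congrArg (fun p : ℤ[X] => p.coeff (2 * (i + 1))) (key1 m k h1 h2)
  simp only [coeff_add] at hk
  rw [coeff_comp_neg] at hk
  rw [Even.neg_one_pow ⟨i + 1, by ring⟩, one_mul] at hk
  rw [coeff_ofNat_mul, coeff_comp_sq, coeff_X_mul] at hk
  have h2i : 2 * i + 2 = 2 * (i + 1) := by omega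
  rw [h2i]
  omega

lemma nd_one_sub_X : ((1 : ℤ[X]) - X).natDegree = 1 := by
  rw [show ((1 : ℤ[X]) - X) = -(X - C 1) by simp, natDegree_neg, natDegree_X_sub_C]

lemma natDegree_w (m k : ℕ) (h1 : 1 ≤ k) (h2 : k ≤ m) : (w m k).natDegree ≤ m - 1 := by
  have hd1 : ((1 : ℤ[X]) - X).natDegree = 1 := nd_one_sub_X
  have hR : (if k % 2 = 0 then Ep (k + 1) else Op (k + 1)).natDegree ≤
      (if k % 2 = 0 then (k + 1) / 2 else k / 2) := by
    split_ifs
    · exact (EO_natDegree k).1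
    · exact (EO_natDegree k).2
  rw [w]
  refine (natDegree_mul_le).trans ?_
  have hx : ((X : ℤ[X]) ^ ((k + 1) / 2 - 1)).natDegree = (k + 1) / 2 - 1 := natDegree_X_pow _
  have hmm : (((1 : ℤ[X]) - X) ^ (m - k)).natDegree ≤ m - k := by
    refine natDegree_pow_le.trans ?_
    rw [hd1]; omega
  refine le_trans (add_le_add (natDegree_mul_le.trans (add_le_add hx.le hmm)) hR) ?_
  split_ifs <;> omega


/-- The lower-unitriangular column-operation matrix. -/
noncomputable def Uc (m : ℕ) : Matrix (Fin m) (Fin m) ℤ :=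
  Matrix.of fun j k =>
    (((1 : ℤ[X]) - X) ^ (m - ((k : ℕ) + 1)) * X ^ ((k : ℕ) + 1)).coeff ((j : ℕ) + 1)

/-- The row-operation matrix (Taylor coefficients at 1, suitably signed). -/
def Phi (m : ℕ) : Matrix (Fin m) (Fin m) ℤ :=
  Matrix.of fun i j => (-1 : ℤ) ^ (m - 1 - (i : ℕ)) * (((j : ℕ)).choose (m - 1 - (i : ℕ)) : ℤ)

lemma Uc_lower (m : ℕ) {j k : Fin m} (h : (j : ℕ) < (k : ℕ)) : Uc m j k = 0 := by
  rw [Uc, Matrix.of_apply, coeff_mul_X_pow']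
  rw [if_neg (by omega)]

lemma Uc_diag (m : ℕ) (k : Fin m) : Uc m k k = 1 := by
  rw [Uc, Matrix.of_apply, coeff_mul_X_pow']
  rw [if_pos (le_refl _), Nat.sub_self, coeff_zero_eq_eval_zero]
  simp

lemma det_Uc (m : ℕ) : (Uc m).det = 1 := by
  have h : (Uc m).BlockTriangular OrderDual.toDual := by
    intro i j hij
    exact Uc_lower m (by exact hij)
  rw [Matrix.det_of_lowerTriangular _ h]
  simp [Uc_diag]

lemma det_Phi (m : ℕ) : (Phi m).det = 1 := by
  induction m with
  | zero => simp [Matrix.det_fin_zero]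
  | succ n ih =>
    rw [Matrix.det_succ_row_zero]
    have hrow : ∀ j : Fin (n + 1), j ≠ Fin.last n →
        (-1 : ℤ) ^ (j : ℕ) * Phi (n + 1) 0 j * ((Phi (n + 1)).submatrix Fin.succ j.succAbove).det = 0 := by
      intro j hj
      have hjlt : (j : ℕ) < n := by
        have := j.isLt
        rcases Nat.lt_or_ge (j : ℕ) n with h | h
        · exact h
        · exfalso; exact hj (Fin.ext (by simp [Fin.val_last]; omega))
      have : Phi (n + 1) 0 j = 0 := by
        rw [Phi, Matrix.of_apply]
        simp only [Fin.val_zero, Nat.sub_zero]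
        rw [Nat.choose_eq_zero_of_lt (by omega)]
        ring
      rw [this]; ring
    rw [Finset.sum_eq_single (Fin.last n) (fun j _ hj => hrow j hj) (by simp)]
    have h0 : Phi (n + 1) 0 (Fin.last n) = (-1 : ℤ) ^ n := by
      rw [Phi, Matrix.of_apply]
      simp [Nat.choose_self]
    have hsub : (Phi (n + 1)).submatrix Fin.succ (Fin.last n).succAbove = Phi n := by
      rw [Fin.succAbove_last]
      ext i j
      rw [Matrix.submatrix_apply, Phi, Phi, Matrix.of_apply, Matrix.of_apply]
      simp only [Fin.val_succ, Fin.coe_castSucc]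
      rw [show n + 1 - 1 - ((i : ℕ) + 1) = n - 1 - (i : ℕ) from by omega]
    rw [h0, hsub, ih]
    simp [Fin.val_last]
    rw [← pow_add]
    exact Even.neg_one_pow ⟨n, rfl⟩

end Stmt18

open Stmt18 Polynomial Finset in
theorem stmt_18 (m : ℕ) (hm : 1 ≤ m) (A : Matrix (Fin m) (Fin m) ℤ)
    (hA : ∀ a b : Fin m, A a b =
      if (0 : ℤ) ≤ 2 * ((a : ℕ) + 1 : ℤ) - ((b : ℕ) + 1 : ℤ) then
        ((m + 1).choose (2 * ((a : ℕ) + 1 : ℤ) - ((b : ℕ) + 1 : ℤ)).toNat : ℤ)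
      else 0) :
    A.det = 2 ^ (m * (m + 1) / 2) := by
  classical
  have hA' : ∀ a b : Fin m, A a b =
      if ((b : ℕ) + 1) ≤ 2 * (a : ℕ) + 2 then
        (((m + 1).choose (2 * (a : ℕ) + 2 - ((b : ℕ) + 1)) : ℤ)) else 0 := by
    intro a b
    rw [hA a b]
    by_cases h : ((b : ℕ) + 1) ≤ 2 * (a : ℕ) + 2
    · rw [if_pos (by omega), if_pos h]
      have ht : (2 * ((a : ℕ) + 1 : ℤ) - ((b : ℕ) + 1 : ℤ)).toNat
          = 2 * (a : ℕ) + 2 - ((b : ℕ) + 1) := by omega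
      rw [ht]
    · rw [if_neg (by omega), if_neg h]
  -- Step 1 : entries of A * Uc
  have hB : ∀ i k : Fin m, (A * Uc m) i k = (w m ((k : ℕ) + 1)).coeff (i : ℕ) := by
    intro i k
    have hk2 : (k : ℕ) + 1 ≤ m := k.isLt
    set c : ℤ[X] := (1 - X) ^ (m - ((k : ℕ) + 1)) * X ^ ((k : ℕ) + 1) with hc
    set g : ℕ → ℤ := fun t =>
      (if t ≤ 2 * (i : ℕ) + 2 then ((m + 1).choose (2 * (i : ℕ) + 2 - t) : ℤ) else 0)
        * c.coeff t with hg
    have hmat : (A * Uc m) i k = ∑ t ∈ Finset.range m, g (t + 1) := by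
      rw [Matrix.mul_apply]
      rw [show (∑ j, A i j * Uc m j k) = ∑ j : Fin m, g ((j : ℕ) + 1) from
        Finset.sum_congr rfl fun j _ => by rw [hA' i j, Uc, Matrix.of_apply, hg]]
      exact Fin.sum_univ_eq_sum_range (fun t => g (t + 1)) m
    have hg0 : g 0 = 0 := by
      have hc0 : c.coeff 0 = 0 := by
        rw [hc, coeff_mul_X_pow', if_neg (by omega)]
      simp [hg, hc0]
    have hsum1 : ∑ t ∈ Finset.range (m + 1), g t = ∑ t ∈ Finset.range m, g (t + 1) := by
      rw [Finset.sum_range_succ' g m, hg0, add_zero]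
    have hcdeg : ∀ t, m < t → c.coeff t = 0 := by
      intro t ht
      apply coeff_eq_zero_of_natDegree_lt
      have h1 : c.natDegree ≤ m := by
        rw [hc]
        refine natDegree_mul_le.trans ?_
        have h2 : (((1 : ℤ[X]) - X) ^ (m - ((k : ℕ) + 1))).natDegree ≤ m - ((k : ℕ) + 1) := by
          refine natDegree_pow_le.trans ?_
          rw [nd_one_sub_X]; omega
        have h3 : ((X : ℤ[X]) ^ ((k : ℕ) + 1)).natDegree = (k : ℕ) + 1 := natDegree_X_pow _
        omega
      omega
    have hext1 : ∑ t ∈ Finset.range (m + 1), g t = ∑ t ∈ Finset.range (2 * m + 3), g t := by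
      apply Finset.sum_subset (Finset.range_subset_range.mpr (by omega))
      intro t ht1 ht2
      rw [Finset.mem_range] at ht1 ht2
      simp [hg, hcdeg t (by omega)]
    have hext2 : ∑ t ∈ Finset.range (2 * (i : ℕ) + 3), g t
        = ∑ t ∈ Finset.range (2 * m + 3), g t := by
      apply Finset.sum_subset (Finset.range_subset_range.mpr (by have := i.isLt; omega))
      intro t ht1 ht2
      rw [Finset.mem_range] at ht1 ht2
      simp only [hg]
      rw [if_neg (by omega), zero_mul]
    have hP : (c * (1 + X) ^ (m + 1)).coeff (2 * (i : ℕ) + 2)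
        = ∑ t ∈ Finset.range (2 * (i : ℕ) + 3), g t := by
      rw [coeff_mul, Finset.Nat.sum_antidiagonal_eq_sum_range_succ_mk]
      apply Finset.sum_congr rfl
      intro t ht
      rw [Finset.mem_range] at ht
      rw [coeff_one_add_X_pow]
      simp only [hg]
      rw [if_pos (by omega), mul_comm]
    have hfin : (A * Uc m) i k = (c * (1 + X) ^ (m + 1)).coeff (2 * (i : ℕ) + 2) := by
      rw [hmat, hP, hext2, ← hext1, hsum1]
    rw [hfin, hc, ← coeffP m ((k : ℕ) + 1) (by omega) hk2 (i : ℕ)]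
  -- Step 2 : entries of Phi * (A * Uc)
  have hN : ∀ i k : Fin m, (Phi m * (A * Uc m)) i k
      = ((w m ((k : ℕ) + 1)).comp (1 - X)).coeff (m - 1 - (i : ℕ)) := by
    intro i k
    have hdeg : (w m ((k : ℕ) + 1)).natDegree < m := by
      have := natDegree_w m ((k : ℕ) + 1) (by omega) k.isLt
      omega
    have hcompsum : (w m ((k : ℕ) + 1)).comp (1 - X)
        = ∑ t ∈ Finset.range m, C ((w m ((k : ℕ) + 1)).coeff t) * (1 - X) ^ t := by
      rw [comp_eq_sum_left]
      exact sum_over_range' _ (by simp) m hdeg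
    have hL : (∑ j : Fin m, Phi m i j * (A * Uc m) j k)
        = ∑ t ∈ Finset.range m, ((-1 : ℤ) ^ (m - 1 - (i : ℕ))
            * ((t.choose (m - 1 - (i : ℕ)) : ℤ)) * (w m ((k : ℕ) + 1)).coeff t) :=
      Eq.trans (Finset.sum_congr rfl fun j _ => by rw [hB j k, Phi, Matrix.of_apply])
        (Fin.sum_univ_eq_sum_range (fun t => (-1 : ℤ) ^ (m - 1 - (i : ℕ))
            * ((t.choose (m - 1 - (i : ℕ)) : ℤ)) * (w m ((k : ℕ) + 1)).coeff t) m)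
    rw [Matrix.mul_apply, hL, hcompsum, finset_sum_coeff]
    apply Finset.sum_congr rfl
    intro t _
    rw [coeff_C_mul, coeff_one_sub_pow]
    ring
  -- Step 3 : the comp of w
  have hwcomp : ∀ k : Fin m, (w m ((k : ℕ) + 1)).comp (1 - X)
      = X ^ (m - ((k : ℕ) + 1)) * ((1 - X) ^ (((k : ℕ) + 1 + 1) / 2 - 1) *
          ((if ((k : ℕ) + 1) % 2 = 0 then Ep ((k : ℕ) + 2) else Op ((k : ℕ) + 2)).comp (1 - X))) := by
    intro k
    rw [w]
    simp only [mul_comp, pow_comp, sub_comp, one_comp, X_comp, sub_sub_cancel]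
    ring
  -- Step 4 : triangularity and diagonal
  have htri : (Phi m * (A * Uc m)).BlockTriangular id := by
    intro i k hik
    rw [hN i k, hwcomp k, coeff_X_pow_mul']
    rw [if_neg (by
      have h1 : (k : ℕ) < (i : ℕ) := hik
      have h2 : (i : ℕ) < m := i.isLt
      omega)]
  have hdiag : ∀ k : Fin m, (Phi m * (A * Uc m)) k k = 2 ^ ((k : ℕ) + 1) := by
    intro k
    rw [hN k k, hwcomp k, coeff_X_pow_mul']
    have h2 : (k : ℕ) < m := k.isLt
    rw [if_pos (by omega), show m - 1 - (k : ℕ) - (m - ((k : ℕ) + 1)) = 0 from by omega]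
    rw [coeff_zero_eq_eval_zero]
    simp only [eval_mul, eval_pow, eval_sub, eval_one, eval_X, eval_comp, sub_zero, one_pow,
      one_mul]
    split_ifs
    · exact (EO_eval ((k : ℕ) + 1)).1
    · exact (EO_eval ((k : ℕ) + 1)).2
  -- Step 5 : assemble
  have hdet : (Phi m * (A * Uc m)).det = 2 ^ (m * (m + 1) / 2) := by
    rw [Matrix.det_of_upperTriangular htri]
    rw [Finset.prod_congr rfl fun k _ => hdiag k]
    rw [Finset.prod_pow_eq_pow_sum]
    congr 1
    rw [Fin.sum_univ_eq_sum_range (fun t => t + 1) m]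
    have h1 : ∑ t ∈ Finset.range (m + 1), t = ∑ t ∈ Finset.range m, (t + 1) := by
      rw [Finset.sum_range_succ' (fun t => t) m]; simp
    rw [← h1, Finset.sum_range_id]
    rw [Nat.mul_comm]
    simp
  rw [Matrix.det_mul, Matrix.det_mul, det_Phi, det_Uc, one_mul, mul_one] at hdet
  exact hdet
end
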